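/- arXiv:1101.5456 — 6 statements merged into one kernel-verified Lean document; each statement's English description precedes it below -/
import Mathlib

section
/- Let f be a rational map of the Riemann sphere of degree d ≥ 1. Then the Fatou set F(f) is completely invariant under f, i.e. f ⁻¹' F(f) = F(f) and f '' F(f) = F(f); consequently the Julia set J(f) is also completely invariant, i.e. f ⁻¹' J(f) = J(f) and f '' J(f) = J(f). -/
open Polynomial Set Metric Filter MeasureTheory

open OnePoint Bornology Topology

noncomputable instance : UniformSpace (OnePoint ℂ) := uniformSpaceOfCompactR1

/-- `f` is a rational map of the Riemann sphere `OnePoint ℂ` of degree `d`: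
`f` is continuous and given by `z ↦ P z / Q z` for coprime polynomials `P, Q`,
not both constant, with `Q ≠ 0` and `d = max (natDegree P) (natDegree Q)`. -/
def IsRationalMap (f : OnePoint ℂ → OnePoint ℂ) (d : ℕ) : Prop :=
  Continuous f ∧ ∃ P Q : Polynomial ℂ, IsCoprime P Q ∧
    ¬(P.natDegree = 0 ∧ Q.natDegree = 0) ∧ Q ≠ 0 ∧ d = max P.natDegree Q.natDegree ∧
    ∀ z : ℂ, Q.eval z ≠ 0 → f (z : OnePoint ℂ) = ((P.eval z / Q.eval z : ℂ) : OnePoint ℂ)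

/-- The Fatou set of `f` : the set of points having an open neighbourhood on which the family
of iterates of `f` is equicontinuous (w.r.t. the canonical uniformity of `OnePoint ℂ`). -/
def FatouSet (f : OnePoint ℂ → OnePoint ℂ) : Set (OnePoint ℂ) :=
  {x | ∃ U : Set (OnePoint ℂ), IsOpen U ∧ x ∈ U ∧ EquicontinuousOn (fun n : ℕ => f^[n]) U}

/-- The Julia set of `f` : the complement of the Fatou set. -/
def JuliaSet (f : OnePoint ℂ → OnePoint ℂ) : Set (OnePoint ℂ) :=
  (FatouSet f)ᶜ

/-- Inversion on the Riemann sphere. -/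
noncomputable def opInv : OnePoint ℂ → OnePoint ℂ := fun x =>
  OnePoint.elim x ((0 : ℂ) : OnePoint ℂ)
    (fun z => if z = 0 then (∞ : OnePoint ℂ) else ((z⁻¹ : ℂ) : OnePoint ℂ))

@[simp] lemma opInv_infty : opInv ∞ = ((0 : ℂ) : OnePoint ℂ) := rfl

lemma opInv_coe (z : ℂ) :
    opInv (z : OnePoint ℂ) = if z = 0 then (∞ : OnePoint ℂ) else ((z⁻¹ : ℂ) : OnePoint ℂ) := rfl

@[simp] lemma opInv_coe_zero : opInv ((0 : ℂ) : OnePoint ℂ) = ∞ := by simp [opInv_coe]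

lemma opInv_coe_ne (z : ℂ) (hz : z ≠ 0) : opInv (z : OnePoint ℂ) = ((z⁻¹ : ℂ) : OnePoint ℂ) := by
  simp [opInv_coe, hz]

lemma opInv_involutive : Function.Involutive opInv := by
  intro x
  induction x using OnePoint.rec with
  | infty => simp
  | coe z =>
    rcases eq_or_ne z 0 with rfl | hz
    · simp
    · rw [opInv_coe_ne z hz, opInv_coe_ne _ (inv_ne_zero hz), inv_inv]

lemma tendsto_coe_cobounded_nhds_infty :
    Tendsto ((↑) : ℂ → OnePoint ℂ) (cobounded ℂ) (𝓝 (∞ : OnePoint ℂ)) := by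
  rw [cobounded_eq_cocompact, ← Filter.coclosedCompact_eq_cocompact]
  exact OnePoint.tendsto_coe_infty

lemma eventually_ne_zero_cobounded : ∀ᶠ z : ℂ in cobounded ℂ, z ≠ 0 :=
  eventually_ne_cobounded 0

lemma continuous_opInv : Continuous opInv := by
  rw [continuous_iff_continuousAt]
  intro x
  induction x using OnePoint.rec with
  | infty =>
    rw [OnePoint.continuousAt_infty', Filter.coclosedCompact_eq_cocompact,
      ← cobounded_eq_cocompact]
    have h1 : Tendsto (fun z : ℂ => ((z⁻¹ : ℂ) : OnePoint ℂ)) (cobounded ℂ)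
        (𝓝 (opInv ∞)) := by
      rw [opInv_infty]
      exact (OnePoint.continuous_coe.tendsto 0).comp tendsto_inv₀_cobounded
    refine Tendsto.congr' ?_ h1
    filter_upwards [eventually_ne_zero_cobounded] with w hw
    simp [Function.comp, opInv_coe_ne w hw]
  | coe z =>
    rw [OnePoint.continuousAt_coe]
    rcases eq_or_ne z 0 with rfl | hz
    · have h0 : (opInv ∘ (↑) : ℂ → OnePoint ℂ) 0 = ∞ := by simp [Function.comp]
      rw [ContinuousAt, h0, ← nhdsNE_sup_pure, tendsto_sup]
      constructor
      · refine Tendsto.congr' ?_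
          (tendsto_coe_cobounded_nhds_infty.comp tendsto_inv₀_nhdsNE_zero)
        filter_upwards [eventually_mem_nhdsWithin] with w hw
        simp [Function.comp, opInv_coe_ne w hw]
      · have := tendsto_pure_nhds (opInv ∘ ((↑) : ℂ → OnePoint ℂ)) 0
        rwa [h0] at this
    · have hc : ContinuousAt ((fun w : ℂ => ((w⁻¹ : ℂ) : OnePoint ℂ))) z :=
        (OnePoint.continuous_coe.continuousAt).comp (continuousAt_inv₀ hz)
      refine hc.congr ?_
      filter_upwards [eventually_ne_nhds hz] with w hw
      simp [Function.comp, opInv_coe_ne w hw]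
lemma coprime_root {P Q : Polynomial ℂ} (h : IsCoprime P Q) (z : ℂ)
    (hQz : Q.eval z = 0) : P.eval z ≠ 0 := by
  obtain ⟨a, b, hab⟩ := h
  intro hPz
  have := congrArg (Polynomial.eval z) hab
  simp [hPz, hQz] at this

lemma eval_reflect {w : ℂ} (hw : w ≠ 0) (N : ℕ) (f : Polynomial ℂ) (hf : f.natDegree ≤ N) :
    (reflect N f).eval w = f.eval w⁻¹ * w ^ N := by
  letI := invertibleOfNonzero (inv_ne_zero hw)
  have h := Polynomial.eval₂_reflect_mul_pow (RingHom.id ℂ) (w⁻¹) N f hf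
  rw [invOf_eq_inv, inv_inv] at h
  rw [Polynomial.eval₂_eq_eval_map, Polynomial.map_id, Polynomial.eval₂_eq_eval_map,
    Polynomial.map_id] at h
  rw [← h, mul_assoc, ← mul_pow, inv_mul_cancel₀ hw, one_pow, mul_one]

lemma reflect_reflect (N : ℕ) (f : Polynomial ℂ) : reflect N (reflect N f) = f := by
  ext i
  simp [coeff_reflect]

lemma natDegree_reflect_le {N : ℕ} {f : Polynomial ℂ} (hf : f.natDegree ≤ N) :
    (reflect N f).natDegree ≤ N := by
  refine Polynomial.natDegree_le_iff_coeff_eq_zero.2 fun i hi => ?_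
  rw [coeff_reflect, revAt_eq_self_of_lt hi]
  exact Polynomial.coeff_eq_zero_of_natDegree_lt (lt_of_le_of_lt hf hi)

lemma eval_zero_reflect (N : ℕ) (f : Polynomial ℂ) : (reflect N f).eval 0 = f.coeff N := by
  rw [← coeff_zero_eq_eval_zero, coeff_reflect, revAt_zero]
lemma eventually_ne_root {Q : Polynomial ℂ} (hQ : Q ≠ 0) (z : ℂ) :
    ∀ᶠ w in 𝓝[≠] z, Q.eval w ≠ 0 := by
  have hfin : ({x : ℂ | Q.IsRoot x} \ {z}).Finite := (Q.finite_setOf_isRoot hQ).subset diff_subset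
  have hmem : ({x : ℂ | Q.IsRoot x} \ {z})ᶜ ∈ 𝓝 z :=
    hfin.isClosed.isOpen_compl.mem_nhds (by simp)
  filter_upwards [mem_nhdsWithin_of_mem_nhds hmem, eventually_mem_nhdsWithin] with w hw hw'
  intro h
  exact hw ⟨h, hw'⟩

lemma eventually_ne_root_cobounded {Q : Polynomial ℂ} (hQ : Q ≠ 0) :
    ∀ᶠ w : ℂ in cobounded ℂ, Q.eval w ≠ 0 := by
  rw [cobounded_eq_cocompact]
  rw [Filter.eventually_iff, Filter.mem_cocompact]
  exact ⟨{x : ℂ | Q.IsRoot x}, (Q.finite_setOf_isRoot hQ).isCompact, fun w hw => hw⟩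

lemma pole_value {f : OnePoint ℂ → OnePoint ℂ} {P Q : Polynomial ℂ} (hc : Continuous f)
    (hQ : Q ≠ 0)
    (hfeq : ∀ z : ℂ, Q.eval z ≠ 0 → f (z : OnePoint ℂ) = ((P.eval z / Q.eval z : ℂ) : OnePoint ℂ))
    {z : ℂ} (hQz : Q.eval z = 0) (hPz : P.eval z ≠ 0) : f (z : OnePoint ℂ) = ∞ := by
  have hevQ : ∀ᶠ w in 𝓝[≠] z, Q.eval w ≠ 0 := eventually_ne_root hQ z
  have hevP : ∀ᶠ w in 𝓝[≠] z, P.eval w ≠ 0 :=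
    (P.continuousAt.eventually_ne hPz).filter_mono nhdsWithin_le_nhds
  have h0 : Tendsto (fun w => Q.eval w / P.eval w) (𝓝[≠] z) (𝓝[≠] (0 : ℂ)) := by
    rw [tendsto_nhdsWithin_iff]
    constructor
    · have : Tendsto (fun w => Q.eval w / P.eval w) (𝓝 z) (𝓝 (Q.eval z / P.eval z)) :=
        (Q.continuousAt.div P.continuousAt hPz).tendsto
      rw [hQz, zero_div] at this
      exact this.mono_left nhdsWithin_le_nhds
    · filter_upwards [hevQ, hevP] with w h1 h2
      exact div_ne_zero h1 h2
  have h1 : Tendsto (fun w => P.eval w / Q.eval w) (𝓝[≠] z) (cobounded ℂ) := by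
    refine Tendsto.congr (fun w => ?_) (tendsto_inv₀_nhdsNE_zero.comp h0)
    simp [inv_div]
  have h2 : Tendsto (fun w : ℂ => f ↑w) (𝓝[≠] z) (𝓝 (∞ : OnePoint ℂ)) := by
    refine Tendsto.congr' ?_ (tendsto_coe_cobounded_nhds_infty.comp h1)
    filter_upwards [hevQ] with w hw
    exact (hfeq w hw).symm
  have h3 : Tendsto (fun w : ℂ => f ↑w) (𝓝[≠] z) (𝓝 (f ↑z)) :=
    (hc.tendsto _).comp ((OnePoint.continuous_coe.tendsto z).mono_left nhdsWithin_le_nhds)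
  exact tendsto_nhds_unique h3 h2

lemma infty_value {f : OnePoint ℂ → OnePoint ℂ} {P Q : Polynomial ℂ} (hc : Continuous f)
    (hQ : Q ≠ 0)
    (hfeq : ∀ z : ℂ, Q.eval z ≠ 0 → f (z : OnePoint ℂ) = ((P.eval z / Q.eval z : ℂ) : OnePoint ℂ))
    {N : ℕ} (hPN : P.natDegree ≤ N) (hQN : Q.natDegree ≤ N) (hQtop : Q.coeff N ≠ 0) :
    f ∞ = ((P.coeff N / Q.coeff N : ℂ) : OnePoint ℂ) := by
  set g : ℂ → ℂ := fun w => (reflect N P).eval w / (reflect N Q).eval w with hg_def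
  have hg : ContinuousAt g 0 := by
    refine (reflect N P).continuousAt.div (reflect N Q).continuousAt ?_
    rw [eval_zero_reflect]; exact hQtop
  have hg0 : g 0 = P.coeff N / Q.coeff N := by
    rw [hg_def]; simp only [eval_zero_reflect]
  have key : ∀ᶠ w : ℂ in cobounded ℂ, f ↑w = ((g w⁻¹ : ℂ) : OnePoint ℂ) := by
    filter_upwards [eventually_ne_root_cobounded hQ, eventually_ne_cobounded (0 : ℂ)]
      with w hQw hw0
    rw [hfeq w hQw, hg_def]
    have hwi : (w⁻¹ : ℂ) ≠ 0 := inv_ne_zero hw0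
    simp only [eval_reflect hwi N P hPN, eval_reflect hwi N Q hQN, inv_inv]
    rw [mul_div_mul_right _ _ (pow_ne_zero N hwi)]
  have hlim : Tendsto (fun w : ℂ => f ↑w) (cobounded ℂ) (𝓝 ((g 0 : ℂ) : OnePoint ℂ)) := by
    refine Tendsto.congr' (key.mono fun w hw => hw.symm)
      ((OnePoint.continuous_coe.tendsto (g 0)).comp (hg.tendsto.comp tendsto_inv₀_cobounded))
  have hlim2 : Tendsto (fun w : ℂ => f ↑w) (cobounded ℂ) (𝓝 (f ∞)) :=
    (hc.tendsto ∞).comp tendsto_coe_cobounded_nhds_infty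
  haveI : (cobounded ℂ).NeBot := by rw [cobounded_eq_cocompact]; infer_instance
  rw [← hg0]
  exact tendsto_nhds_unique hlim2 hlim
lemma nhds_le_map_nonpole {f : OnePoint ℂ → OnePoint ℂ} {P Q : Polynomial ℂ}
    (hco : IsCoprime P Q) (hnc : ¬(P.natDegree = 0 ∧ Q.natDegree = 0))
    (hfeq : ∀ z : ℂ, Q.eval z ≠ 0 → f (z : OnePoint ℂ) = ((P.eval z / Q.eval z : ℂ) : OnePoint ℂ))
    {z : ℂ} (hz : Q.eval z ≠ 0) :
    𝓝 (f (z : OnePoint ℂ)) ≤ map f (𝓝 (z : OnePoint ℂ)) := by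
  set g : ℂ → ℂ := fun w => P.eval w / Q.eval w with hg_def
  have hevQ : ∀ᶠ w in 𝓝 z, Q.eval w ≠ 0 := Q.continuousAt.eventually_ne hz
  have hga : AnalyticAt ℂ g z :=
    ((P.differentiable.analyticAt z)).div ((Q.differentiable.analyticAt z)) hz
  have hne : ¬∀ᶠ w in 𝓝 z, g w = g z := by
    intro hev
    have hroot : ∀ᶠ w in 𝓝 z, (P - Polynomial.C (g z) * Q).eval w = 0 := by
      filter_upwards [hev, hevQ] with w hw hQw
      have : P.eval w = g z * Q.eval w := by
        rw [← hw, hg_def]; field_simp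
      simp [this]
    have hPQ : P - Polynomial.C (g z) * Q = 0 := by
      refine Polynomial.eq_zero_of_infinite_isRoot _ ?_
      have : {w : ℂ | (P - Polynomial.C (g z) * Q).IsRoot w}.Infinite := by
        refine Set.Infinite.mono ?_ (infinite_of_mem_nhds z (hroot.mono fun w hw => hw))
        exact fun w hw => hw
      exact this
    have hP : P = Polynomial.C (g z) * Q := by linear_combination hPQ
    obtain ⟨a, b, hab⟩ := hco
    have hQunit : IsUnit Q := by
      refine IsUnit.of_mul_eq_one (a := Q) (a * Polynomial.C (g z) + b) ?_
      rw [← hab, hP]; ring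
    have hQ0 : Q.natDegree = 0 := Polynomial.natDegree_eq_zero_of_isUnit hQunit
    have hP0 : P.natDegree = 0 := by
      rw [hP]
      have := Polynomial.natDegree_mul_le (p := Polynomial.C (g z)) (q := Q)
      simp [hQ0] at this
      omega
    exact hnc ⟨hP0, hQ0⟩
  have hopen : 𝓝 (g z) ≤ map g (𝓝 z) :=
    hga.eventually_constant_or_nhds_le_map_nhds.resolve_left hne
  have h1 : 𝓝 (f (z : OnePoint ℂ)) = map ((↑) : ℂ → OnePoint ℂ) (𝓝 (g z)) := by
    rw [hfeq z hz, OnePoint.nhds_coe_eq]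
  have h2 : map f (𝓝 (z : OnePoint ℂ)) = map (fun w : ℂ => ((g w : ℂ) : OnePoint ℂ)) (𝓝 z) := by
    rw [OnePoint.nhds_coe_eq, Filter.map_map]
    exact Filter.map_congr (hevQ.mono fun w hw => hfeq w hw)
  rw [h1, h2]
  calc map ((↑) : ℂ → OnePoint ℂ) (𝓝 (g z)) ≤ map ((↑) : ℂ → OnePoint ℂ) (map g (𝓝 z)) :=
        Filter.map_mono hopen
  _ = map (fun w : ℂ => ((g w : ℂ) : OnePoint ℂ)) (𝓝 z) := Filter.map_map
lemma map_opInv_nhds (x : OnePoint ℂ) : map opInv (𝓝 x) = 𝓝 (opInv x) := by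
  refine le_antisymm (continuous_opInv.tendsto x) ?_
  have h := Filter.map_mono (m := opInv) (continuous_opInv.tendsto (opInv x))
  rw [Filter.map_map, opInv_involutive.comp_self, Filter.map_id, opInv_involutive x] at h
  exact h

lemma nhds_le_map_finite {f : OnePoint ℂ → OnePoint ℂ} {P Q : Polynomial ℂ}
    (hc : Continuous f) (hco : IsCoprime P Q) (hnc : ¬(P.natDegree = 0 ∧ Q.natDegree = 0))
    (hQ : Q ≠ 0)
    (hfeq : ∀ z : ℂ, Q.eval z ≠ 0 → f (z : OnePoint ℂ) = ((P.eval z / Q.eval z : ℂ) : OnePoint ℂ))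
    (z : ℂ) : 𝓝 (f (z : OnePoint ℂ)) ≤ map f (𝓝 (z : OnePoint ℂ)) := by
  by_cases hz : Q.eval z ≠ 0
  · exact nhds_le_map_nonpole hco hnc hfeq hz
  push_neg at hz
  have hPz : P.eval z ≠ 0 := coprime_root hco z hz
  set f' : OnePoint ℂ → OnePoint ℂ := opInv ∘ f with hf'_def
  have hfeq' : ∀ w : ℂ, P.eval w ≠ 0 →
      f' (w : OnePoint ℂ) = ((Q.eval w / P.eval w : ℂ) : OnePoint ℂ) := by
    intro w hPw
    by_cases hQw : Q.eval w = 0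
    · have h1 : f (w : OnePoint ℂ) = ∞ := pole_value hc hQ hfeq hQw hPw
      simp [hf'_def, Function.comp, h1, hQw]
    · have h1 := hfeq w hQw
      simp [hf'_def, Function.comp, h1, opInv_coe_ne _ (div_ne_zero hPw hQw), inv_div]
  have h' := nhds_le_map_nonpole hco.symm (fun h => hnc ⟨h.2, h.1⟩) hfeq' hPz
  have h2 := Filter.map_mono (m := opInv) h'
  rw [map_opInv_nhds, Filter.map_map] at h2
  have h3 : opInv (f' (z : OnePoint ℂ)) = f (z : OnePoint ℂ) := opInv_involutive _
  have h4 : opInv ∘ f' = f := by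
    funext y; exact opInv_involutive _
  rw [h3, h4] at h2
  exact h2

lemma nhds_le_map {f : OnePoint ℂ → OnePoint ℂ} {d : ℕ} (hd : 1 ≤ d)
    (hf : IsRationalMap f d) (x : OnePoint ℂ) : 𝓝 (f x) ≤ map f (𝓝 x) := by
  obtain ⟨hc, P, Q, hco, hnc, hQ, hdeg, hfeq⟩ := hf
  set n : ℕ := max P.natDegree Q.natDegree with hn_def
  have hPn : P.natDegree ≤ n := le_max_left _ _
  have hQn : Q.natDegree ≤ n := le_max_right _ _
  have hn1 : 1 ≤ n := by omega
  have hP : P ≠ 0 := by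
    intro h
    rw [h, isCoprime_zero_left] at hco
    exact hnc ⟨by simp [h], Polynomial.natDegree_eq_zero_of_isUnit hco⟩
  induction x using OnePoint.rec with
  | coe z => exact nhds_le_map_finite hc hco hnc hQ hfeq z
  | infty =>
    set f2 : OnePoint ℂ → OnePoint ℂ := f ∘ opInv with hf2_def
    set P' : Polynomial ℂ := reflect n P with hP'_def
    set Q' : Polynomial ℂ := reflect n Q with hQ'_def
    have hP' : P' ≠ 0 := fun h => hP (reflect_eq_zero_iff.mp h)
    have hQ' : Q' ≠ 0 := fun h => hQ (reflect_eq_zero_iff.mp h)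
    have hcoeffn : P.coeff n ≠ 0 ∨ Q.coeff n ≠ 0 := by
      rcases max_cases P.natDegree Q.natDegree with ⟨h1, _⟩ | ⟨h1, _⟩
      · exact Or.inl (by rw [hn_def, h1]; exact Polynomial.leadingCoeff_ne_zero.2 hP)
      · exact Or.inr (by rw [hn_def, h1]; exact Polynomial.leadingCoeff_ne_zero.2 hQ)
    -- coprimality of the reflected polynomials
    have hco' : IsCoprime P' Q' := by
      rw [← EuclideanDomain.gcd_isUnit_iff]
      by_contra hgu
      set g : Polynomial ℂ := EuclideanDomain.gcd P' Q' with hg_def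
      have hg0 : g ≠ 0 := by
        intro h
        exact hP' (EuclideanDomain.gcd_eq_zero_iff.mp h).1
      have hgdeg : 0 < g.natDegree := by
        rcases Nat.eq_zero_or_pos g.natDegree with h | h
        · obtain ⟨c, hcg⟩ := Polynomial.natDegree_eq_zero.mp h
          have hc0 : c ≠ 0 := fun h0 => hg0 (by rw [← hcg, h0, map_zero])
          exact absurd (hcg ▸ isUnit_C.2 (Ne.isUnit hc0)) hgu
        · exact h
      obtain ⟨w, hw⟩ := Complex.exists_root (Polynomial.natDegree_pos_iff_degree_pos.mp hgdeg)
      have hwP : P'.IsRoot w := hw.dvd (EuclideanDomain.gcd_dvd_left _ _)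
      have hwQ : Q'.IsRoot w := hw.dvd (EuclideanDomain.gcd_dvd_right _ _)
      rcases eq_or_ne w 0 with rfl | hw0
      · rw [Polynomial.IsRoot, hP'_def, eval_zero_reflect] at hwP
        rw [Polynomial.IsRoot, hQ'_def, eval_zero_reflect] at hwQ
        rcases hcoeffn with h | h
        · exact h hwP
        · exact h hwQ
      · rw [Polynomial.IsRoot, hP'_def, eval_reflect hw0 n P hPn] at hwP
        rw [Polynomial.IsRoot, hQ'_def, eval_reflect hw0 n Q hQn] at hwQ
        have hwn : w ^ n ≠ 0 := pow_ne_zero _ hw0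
        have hQz : Q.eval w⁻¹ = 0 := by
          rcases mul_eq_zero.mp hwQ with h | h
          · exact h
          · exact absurd h hwn
        have hPz : P.eval w⁻¹ = 0 := by
          rcases mul_eq_zero.mp hwP with h | h
          · exact h
          · exact absurd h hwn
        exact coprime_root hco w⁻¹ hQz hPz
    have hnc' : ¬(P'.natDegree = 0 ∧ Q'.natDegree = 0) := by
      rintro ⟨h1, h2⟩
      obtain ⟨c, hc1⟩ := Polynomial.natDegree_eq_zero.mp h1
      obtain ⟨c', hc2⟩ := Polynomial.natDegree_eq_zero.mp h2
      have hPform : P = Polynomial.C c * Polynomial.X ^ n := by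
        have h3 : reflect n (Polynomial.C c * Polynomial.X ^ 0) = P := by
          rw [pow_zero, mul_one, hc1, hP'_def, reflect_reflect]
        rw [← h3, Polynomial.reflect_C_mul_X_pow, revAt_zero]
      have hQform : Q = Polynomial.C c' * Polynomial.X ^ n := by
        have h3 : reflect n (Polynomial.C c' * Polynomial.X ^ 0) = Q := by
          rw [pow_zero, mul_one, hc2, hQ'_def, reflect_reflect]
        rw [← h3, Polynomial.reflect_C_mul_X_pow, revAt_zero]
      have hQz : Q.eval 0 = 0 := by
        rw [hQform]; simp [zero_pow (by omega : n ≠ 0)]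
      have hPz : P.eval 0 = 0 := by
        rw [hPform]; simp [zero_pow (by omega : n ≠ 0)]
      exact coprime_root hco 0 hQz hPz
    have hfeq2 : ∀ w : ℂ, Q'.eval w ≠ 0 →
        f2 (w : OnePoint ℂ) = ((P'.eval w / Q'.eval w : ℂ) : OnePoint ℂ) := by
      intro w hw
      rcases eq_or_ne w 0 with rfl | hw0
      · rw [hQ'_def, eval_zero_reflect] at hw
        have h1 : f2 ((0 : ℂ) : OnePoint ℂ) = f ∞ := by
          rw [hf2_def]; simp [Function.comp]
        rw [h1, infty_value hc hQ hfeq hPn hQn hw]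
        rw [hP'_def, hQ'_def, eval_zero_reflect, eval_zero_reflect]
      · have hQwi : Q.eval w⁻¹ ≠ 0 := by
          rw [hQ'_def, eval_reflect hw0 n Q hQn] at hw
          exact left_ne_zero_of_mul hw
        have h1 : f2 ((w : ℂ) : OnePoint ℂ) = f ((w⁻¹ : ℂ) : OnePoint ℂ) := by
          rw [hf2_def]; simp [Function.comp, opInv_coe_ne w hw0]
        rw [h1, hfeq w⁻¹ hQwi, hP'_def, hQ'_def, eval_reflect hw0 n P hPn,
          eval_reflect hw0 n Q hQn, mul_div_mul_right _ _ (pow_ne_zero n hw0)]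
    have h := nhds_le_map_finite (hc.comp continuous_opInv) hco' hnc' hQ' hfeq2 0
    have h1 : f2 ((0 : ℂ) : OnePoint ℂ) = f ∞ := by rw [hf2_def]; simp [Function.comp]
    have h2 : map f2 (𝓝 ((0 : ℂ) : OnePoint ℂ)) = map f (𝓝 (∞ : OnePoint ℂ)) := by
      rw [hf2_def, ← Filter.map_map, map_opInv_nhds, opInv_coe_zero]
    rw [← hf2_def] at h
    rw [h1, h2] at h
    exact h
lemma isOpenMap_of_rational {f : OnePoint ℂ → OnePoint ℂ} {d : ℕ} (hd : 1 ≤ d)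
    (hf : IsRationalMap f d) : IsOpenMap f :=
  IsOpenMap.of_nhds_le fun x => nhds_le_map hd hf x

lemma surjective_of_rational {f : OnePoint ℂ → OnePoint ℂ} {d : ℕ} (hd : 1 ≤ d)
    (hf : IsRationalMap f d) : Function.Surjective f := by
  have hopen : IsOpen (range f) := (isOpenMap_of_rational hd hf).isOpen_range
  have hclosed : IsClosed (range f) := (isCompact_range hf.1).isClosed
  rw [← Set.range_eq_univ]
  exact IsClopen.eq_univ ⟨hclosed, hopen⟩ ⟨f ∞, Set.mem_range_self _⟩

lemma mem_fatou_of_apply_mem {f : OnePoint ℂ → OnePoint ℂ} (hc : Continuous f)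
    {x : OnePoint ℂ} (hx : f x ∈ FatouSet f) : x ∈ FatouSet f := by
  obtain ⟨U, hUo, hUx, hUeq⟩ := hx
  refine ⟨f ⁻¹' U, hUo.preimage hc, hUx, ?_⟩
  intro y hy V hV
  have h1 : ∀ᶠ u in 𝓝 (f y), ∀ n : ℕ, (f^[n] (f y), f^[n] u) ∈ V := by
    have := hUeq (f y) hy V hV
    rwa [nhdsWithin_eq_nhds.2 (hUo.mem_nhds hy)] at this
  have h2 : ∀ᶠ w in 𝓝 y, ∀ n : ℕ, (f^[n] (f y), f^[n] (f w)) ∈ V :=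
    (hc.tendsto y).eventually h1
  have h0 : ∀ᶠ w in 𝓝 y, (y, w) ∈ V := by
    have := UniformSpace.ball_mem_nhds y hV
    filter_upwards [this] with w hw
    exact hw
  have h3 : ∀ᶠ w in 𝓝 y, ∀ n : ℕ, (f^[n] y, f^[n] w) ∈ V := by
    filter_upwards [h0, h2] with w hw0 hw2
    intro n
    cases n with
    | zero => simpa using hw0
    | succ m =>
      rw [Function.iterate_succ_apply, Function.iterate_succ_apply]
      exact hw2 m
  exact h3.filter_mono nhdsWithin_le_nhds

lemma apply_mem_fatou_of_mem {f : OnePoint ℂ → OnePoint ℂ} {d : ℕ} (hd : 1 ≤ d)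
    (hf : IsRationalMap f d) {x : OnePoint ℂ} (hx : x ∈ FatouSet f) : f x ∈ FatouSet f := by
  obtain ⟨U, hUo, hUx, hUeq⟩ := hx
  refine ⟨f '' U, isOpenMap_of_rational hd hf U hUo, ⟨x, hUx, rfl⟩, ?_⟩
  rintro y ⟨u, hu, rfl⟩ V hV
  have h1 : ∀ᶠ w in 𝓝 u, ∀ n : ℕ, (f^[n] u, f^[n] w) ∈ V := by
    have := hUeq u hu V hV
    rwa [nhdsWithin_eq_nhds.2 (hUo.mem_nhds hu)] at this
  have h2 : ∀ᶠ y' in 𝓝 (f u), ∀ n : ℕ, (f^[n] (f u), f^[n] y') ∈ V := by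
    have hT : {w : OnePoint ℂ | ∀ n : ℕ, (f^[n] u, f^[n] w) ∈ V} ⊆
        f ⁻¹' {y' : OnePoint ℂ | ∀ n : ℕ, (f^[n] (f u), f^[n] y') ∈ V} := by
      intro w hw
      intro n
      rw [← Function.iterate_succ_apply, ← Function.iterate_succ_apply]
      exact hw (n + 1)
    have hmem : {y' : OnePoint ℂ | ∀ n : ℕ, (f^[n] (f u), f^[n] y') ∈ V} ∈
        map f (𝓝 u) := by
      rw [Filter.mem_map]
      exact Filter.mem_of_superset h1 hT
    exact nhds_le_map hd hf u hmem
  exact h2.filter_mono nhdsWithin_le_nhds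

theorem fatou_julia_completely_invariant
    (f : OnePoint ℂ → OnePoint ℂ) (d : ℕ) (hd : 1 ≤ d) (hf : IsRationalMap f d) :
    f ⁻¹' FatouSet f = FatouSet f ∧ f '' FatouSet f = FatouSet f ∧
      f ⁻¹' JuliaSet f = JuliaSet f ∧ f '' JuliaSet f = JuliaSet f := by
  have hsurj : Function.Surjective f := surjective_of_rational hd hf
  have hpre : f ⁻¹' FatouSet f = FatouSet f := by
    apply Set.Subset.antisymm
    · intro x hx
      exact mem_fatou_of_apply_mem hf.1 hx
    · intro x hx
      exact apply_mem_fatou_of_mem hd hf hx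
  have himg : f '' FatouSet f = FatouSet f := by
    conv_lhs => rw [← hpre]
    exact Set.image_preimage_eq _ hsurj
  have hpreJ : f ⁻¹' JuliaSet f = JuliaSet f := by
    rw [JuliaSet, Set.preimage_compl, hpre]
  have himgJ : f '' JuliaSet f = JuliaSet f := by
    conv_lhs => rw [← hpreJ]
    exact Set.image_preimage_eq _ hsurj
  exact ⟨hpre, himg, hpreJ, himgJ⟩
end

section
/- Let f be a rational map of the Riemann sphere of degree d ≥ 1 determined by coprime polynomials P, Q, and let z₀ ∈ ℂ satisfy eval z₀ Q ≠ 0 and R z₀ = z₀, where R z = eval z P / eval z Q. If |deriv R z₀| < 1 (z₀ is an attracting or superattracting fixed point), then ↑z₀ belongs to the Fatou set F(f). -/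
open Polynomial Set Metric Filter MeasureTheory

theorem attracting_fixedPoint_mem_fatouSet
    (f : OnePoint ℂ → OnePoint ℂ) (d : ℕ) (hd : 1 ≤ d)
    (P Q : Polynomial ℂ) (hf : Continuous f) (hPQ : IsCoprime P Q)
    (hne : ¬(P.natDegree = 0 ∧ Q.natDegree = 0)) (hQ : Q ≠ 0)
    (hdeg : d = max P.natDegree Q.natDegree)
    (hfPQ : ∀ z : ℂ, Q.eval z ≠ 0 → f (z : OnePoint ℂ) = ((P.eval z / Q.eval z : ℂ) : OnePoint ℂ))
    (R : ℂ → ℂ) (hR : ∀ z : ℂ, R z = P.eval z / Q.eval z)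
    (z₀ : ℂ) (hz₀ : Q.eval z₀ ≠ 0) (hfix : R z₀ = z₀)
    (hattr : ‖deriv R z₀‖ < 1) :
    (z₀ : OnePoint ℂ) ∈ FatouSet f := by
  have hRfun : R = fun z => P.eval z / Q.eval z := funext hR
  have hsopen : IsOpen {z : ℂ | Q.eval z ≠ 0} := isOpen_ne.preimage Q.continuous
  have hdiff : ∀ z : ℂ, Q.eval z ≠ 0 → DifferentiableAt ℂ R z := by
    intro z hz
    rw [hRfun]
    exact P.differentiableAt.div Q.differentiableAt hz
  -- continuity of deriv R at z₀
  set g : ℂ → ℂ := fun z =>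
    (P.derivative.eval z * Q.eval z - P.eval z * Q.derivative.eval z) / (Q.eval z) ^ 2 with hg
  have hderiv_eq : ∀ z : ℂ, Q.eval z ≠ 0 → deriv R z = g z := by
    intro z hz
    rw [hRfun, deriv_fun_div P.differentiableAt Q.differentiableAt hz, Polynomial.deriv,
      Polynomial.deriv]
  have hgc : ContinuousAt g z₀ :=
    (((P.derivative.continuousAt.mul Q.continuousAt).sub
      (P.continuousAt.mul Q.derivative.continuousAt)).div
      (Q.continuousAt.pow 2) (pow_ne_zero 2 hz₀))
  have hEq : deriv R =ᶠ[nhds z₀] g :=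
    Filter.eventuallyEq_of_mem (hsopen.mem_nhds hz₀) fun z hz => hderiv_eq z hz
  have hcont : ContinuousAt (deriv R) z₀ := hgc.congr hEq.symm
  have hattr' : ‖deriv R z₀‖ < 1 := by exact hattr
  have hev : ∀ᶠ z in nhds z₀, ‖deriv R z‖ < 1 ∧ Q.eval z ≠ 0 := by
    have h1 : ∀ᶠ z in nhds z₀, ‖deriv R z‖ < 1 :=
      (hcont.norm).eventually_lt_const hattr'
    exact h1.and (hsopen.mem_nhds hz₀)
  obtain ⟨ε₀, hε₀, hball⟩ := Metric.eventually_nhds_iff_ball.mp hev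
  set r : ℝ := ε₀ / 2 with hrdef
  have hr : 0 < r := by positivity
  set K : Set ℂ := closedBall z₀ r with hKdef
  have hKsub : K ⊆ ball z₀ ε₀ := by
    apply closedBall_subset_ball
    simp only [hrdef]
    linarith
  have hQK : ∀ z ∈ K, Q.eval z ≠ 0 := fun z hz => (hball z (hKsub hz)).2
  have hz₀K : z₀ ∈ K := mem_closedBall_self hr.le
  -- R is 1-Lipschitz on K and maps K to K
  have hLip : LipschitzOnWith 1 R K := by
    apply Convex.lipschitzOnWith_of_nnnorm_deriv_le
      (fun z hz => hdiff z (hQK z hz))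
      (fun z hz => ?_) (convex_closedBall z₀ r)
    have := (hball z (hKsub hz)).1
    simpa [← NNReal.coe_le_coe] using this.le
  have hMaps : MapsTo R K K := by
    intro z hz
    have := hLip.dist_le_mul z hz z₀ hz₀K
    rw [hfix] at this
    simp only [NNReal.coe_one, one_mul] at this
    exact mem_closedBall.mpr (this.trans (mem_closedBall.mp hz))
  have key : ∀ n : ℕ, MapsTo (R^[n]) K K ∧ LipschitzOnWith 1 (R^[n]) K := by
    intro n
    induction n with
    | zero =>
      simp only [Function.iterate_zero]
      exact ⟨mapsTo_id K, LipschitzWith.id.lipschitzOnWith⟩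
    | succ n ih =>
      rw [Function.iterate_succ]
      refine ⟨ih.1.comp hMaps, ?_⟩
      simpa using ih.2.comp hLip hMaps
  -- f iterates agree with R iterates on K
  have hiter : ∀ n : ℕ, ∀ z ∈ K, f^[n] (z : OnePoint ℂ) = ((R^[n] z : ℂ) : OnePoint ℂ) := by
    intro n
    induction n with
    | zero => intro z hz; simp
    | succ n ih =>
      intro z hz
      rw [Function.iterate_succ_apply, Function.iterate_succ_apply]
      have h1 : f (z : OnePoint ℂ) = ((R z : ℂ) : OnePoint ℂ) := by
        rw [hfPQ z (hQK z hz), hR]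
      rw [h1]
      exact ih (R z) (hMaps hz)
  -- uniform continuity of the coercion on the compact set K
  have hKcomp : IsCompact K := isCompact_closedBall _ _
  haveI : CompactSpace K := isCompact_iff_compactSpace.mp hKcomp
  have hUC : UniformContinuous (fun p : K => ((p : ℂ) : OnePoint ℂ)) :=
    CompactSpace.uniformContinuous_of_continuous
      (by exact OnePoint.continuous_coe.comp continuous_subtype_val)
  -- the open neighbourhood
  refine ⟨(↑) '' ball z₀ r, OnePoint.isOpenEmbedding_coe.isOpenMap _ isOpen_ball,
    ⟨z₀, mem_ball_self hr, rfl⟩, ?_⟩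
  rintro x ⟨z, hz, rfl⟩
  intro V hV
  have hVK := Filter.mem_map.mp (hUC hV)
  obtain ⟨ε, hε, hεV⟩ := Metric.mem_uniformity_dist.mp hVK
  have hzK : z ∈ K := ball_subset_closedBall hz
  have hnb : (↑) '' ball z ε ∈ nhds (z : OnePoint ℂ) :=
    (OnePoint.isOpenEmbedding_coe.isOpenMap _ isOpen_ball).mem_nhds
      ⟨z, mem_ball_self hε, rfl⟩
  filter_upwards [mem_nhdsWithin_of_mem_nhds hnb, self_mem_nhdsWithin] with y hy hyU n
  obtain ⟨w, hw, rfl⟩ := hy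
  obtain ⟨w', hw', hw'eq⟩ := hyU
  have hww' : w' = w := OnePoint.coe_injective hw'eq
  subst hww'
  have hwK : w' ∈ K := ball_subset_closedBall hw'
  rw [hiter n z hzK, hiter n w' hwK]
  have hd1 : dist (R^[n] z) (R^[n] w') ≤ dist z w' := by
    have := (key n).2.dist_le_mul z hzK w' hwK
    simpa using this
  have hd2 : dist (R^[n] z) (R^[n] w') < ε := lt_of_le_of_lt hd1 (mem_ball'.mp hw)
  exact hεV (a := ⟨R^[n] z, (key n).1 hzK⟩) (b := ⟨R^[n] w', (key n).1 hwK⟩)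
    (by rwa [Subtype.dist_eq])
end

section
/- Let f be a rational map of the Riemann sphere of degree d ≥ 1 determined by coprime polynomials P, Q, and let z₀ ∈ ℂ satisfy eval z₀ Q ≠ 0 and R z₀ = z₀, where R z = eval z P / eval z Q. If |deriv R z₀| > 1 (z₀ is a repelling fixed point), then ↑z₀ belongs to the Julia set J(f). -/
open Polynomial Set Metric Filter MeasureTheory

theorem repelling_fixedPoint_mem_juliaSet
    (f : OnePoint ℂ → OnePoint ℂ) (d : ℕ) (hd : 1 ≤ d)
    (P Q : Polynomial ℂ) (hf : Continuous f) (hPQ : IsCoprime P Q)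
    (hne : ¬(P.natDegree = 0 ∧ Q.natDegree = 0)) (hQ : Q ≠ 0)
    (hdeg : d = max P.natDegree Q.natDegree)
    (hfPQ : ∀ z : ℂ, Q.eval z ≠ 0 → f (z : OnePoint ℂ) = ((P.eval z / Q.eval z : ℂ) : OnePoint ℂ))
    (R : ℂ → ℂ) (hR : ∀ z : ℂ, R z = P.eval z / Q.eval z)
    (z₀ : ℂ) (hz₀ : Q.eval z₀ ≠ 0) (hfix : R z₀ = z₀)
    (hrep : 1 < ‖deriv R z₀‖) :
    (z₀ : OnePoint ℂ) ∈ JuliaSet f := by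
  set c := deriv R z₀ with hc
  have hcnorm : 1 < ‖c‖ := by exact hrep
  -- differentiability of R at z₀
  have hRfun : R = fun z => P.eval z / Q.eval z := funext hR
  have hdiff : DifferentiableAt ℂ R z₀ := by
    rw [hRfun]
    exact (P.differentiableAt).div (Q.differentiableAt) hz₀
  have hder : HasDerivAt R c z₀ := hdiff.hasDerivAt
  set μ := (‖c‖ + 1) / 2 with hμdef
  have hμ : 1 < μ := by simp only [hμdef]; linarith
  have hε : (0 : ℝ) < (‖c‖ - 1) / 2 := by linarith
  have hlo := (hasDerivAt_iff_isLittleO.1 hder).def hε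
  -- eventual expansion + nonvanishing of Q
  have hQev : ∀ᶠ z in nhds z₀, Q.eval z ≠ 0 :=
    (Q.continuous_aeval.continuousAt (x := z₀)).eventually_ne hz₀
  have hev : ∀ᶠ z in nhds z₀, Q.eval z ≠ 0 ∧ μ * dist z z₀ ≤ dist (R z) z₀ := by
    filter_upwards [hQev, hlo] with z h1 h2
    refine ⟨h1, ?_⟩
    have h3 : ‖R z - z₀ - (z - z₀) * c‖ ≤ (‖c‖ - 1) / 2 * ‖z - z₀‖ := by
      simpa [hfix, smul_eq_mul] using h2
    have h4 : ‖(z - z₀) * c‖ - ‖R z - z₀ - (z - z₀) * c‖ ≤ ‖R z - z₀‖ := by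
      have := norm_sub_norm_le ((z - z₀) * c) ((z - z₀) * c - (R z - z₀))
      simp only [sub_sub_cancel] at this
      calc ‖(z - z₀) * c‖ - ‖R z - z₀ - (z - z₀) * c‖
          = ‖(z - z₀) * c‖ - ‖(z - z₀) * c - (R z - z₀)‖ := by rw [norm_sub_rev]
        _ ≤ ‖R z - z₀‖ := this
    rw [dist_eq_norm, dist_eq_norm]
    have h5 : ‖(z - z₀) * c‖ = ‖c‖ * ‖z - z₀‖ := by rw [norm_mul]; ring
    nlinarith [norm_nonneg (z - z₀)]
  rw [Metric.eventually_nhds_iff] at hev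
  obtain ⟨r, hr0, hball⟩ := hev
  have hQne : ∀ z : ℂ, dist z z₀ < r → Q.eval z ≠ 0 := fun z h => (hball h).1
  have hexp : ∀ z : ℂ, dist z z₀ < r → μ * dist z z₀ ≤ dist (R z) z₀ := fun z h => (hball h).2
  have hfstep : ∀ z : ℂ, Q.eval z ≠ 0 → f ↑z = ↑(R z) := fun z h => by rw [hfPQ z h, hR]
  have hfix' : f ↑z₀ = ↑z₀ := by rw [hfstep z₀ hz₀, hfix]
  have hfixn : ∀ n : ℕ, f^[n] ↑z₀ = ↑z₀ := fun n => Function.iterate_fixed hfix' n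
  -- escape lemma
  have key : ∀ y : ℂ, 0 < dist y z₀ → dist y z₀ < r →
      ∃ m : ℕ, r ≤ dist (R^[m] y) z₀ ∧ f^[m] ↑y = ↑(R^[m] y) := by
    intro y hy0 hyr
    have hgrow : ∀ m : ℕ, (∀ k ≤ m, dist (R^[k] y) z₀ < r) →
        μ ^ m * dist y z₀ ≤ dist (R^[m] y) z₀ := by
      intro m
      induction m with
      | zero => intro _; simp
      | succ n ih =>
        intro h
        have h1 : μ ^ n * dist y z₀ ≤ dist (R^[n] y) z₀ := ih fun k hk => h k (hk.trans n.le_succ)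
        have h2 : μ * dist (R^[n] y) z₀ ≤ dist (R (R^[n] y)) z₀ :=
          hexp _ (h n n.le_succ)
        rw [Function.iterate_succ_apply']
        calc μ ^ (n + 1) * dist y z₀ = μ * (μ ^ n * dist y z₀) := by ring
          _ ≤ μ * dist (R^[n] y) z₀ := by nlinarith
          _ ≤ dist (R (R^[n] y)) z₀ := h2
    have hex : ∃ m : ℕ, r ≤ dist (R^[m] y) z₀ := by
      by_contra hcon
      push_neg at hcon
      obtain ⟨n, hn⟩ := pow_unbounded_of_one_lt (r / dist y z₀) hμ
      have := hgrow n (fun k _ => hcon k)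
      have hlt : r < μ ^ n * dist y z₀ := by
        rw [div_lt_iff₀ hy0] at hn; linarith
      exact absurd (this.trans_lt (hcon n)) (by linarith)
    set m := Nat.find hex with hm
    refine ⟨m, Nat.find_spec hex, ?_⟩
    have hmin : ∀ k, k < m → dist (R^[k] y) z₀ < r := by
      intro k hk
      have := Nat.find_min hex hk
      push_neg at this
      exact this
    clear hm
    -- f^[k] ↑y = ↑(R^[k] y) for k ≤ m
    have : ∀ k ≤ m, f^[k] (↑y : OnePoint ℂ) = ↑(R^[k] y) := by
      intro k hk
      induction k with
      | zero => simp
      | succ n ih =>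
        rw [Function.iterate_succ_apply', Function.iterate_succ_apply',
          ih (n.le_succ.trans hk), hfstep _ (hQne _ (hmin n hk))]
    exact this m le_rfl
  -- topology part
  intro hmem
  obtain ⟨U, hUopen, hUmem, hequi⟩ := hmem
  have himg : (fun z : ℂ => (z : OnePoint ℂ)) '' ball z₀ r ∈ nhds (↑z₀ : OnePoint ℂ) :=
    (OnePoint.isOpenEmbedding_coe.isOpenMap _ isOpen_ball).mem_nhds
      ⟨z₀, mem_ball_self hr0, rfl⟩
  erw [nhds_eq_comap_uniformity, mem_comap] at himg
  obtain ⟨V, hV, hVsub⟩ := himg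
  have hec := hequi ↑z₀ hUmem V hV
  rw [nhdsWithin_eq_nhds.2 (hUopen.mem_nhds hUmem)] at hec
  have hec' : ∀ᶠ z : ℂ in nhds z₀, ∀ n : ℕ, (f^[n] ↑z₀, f^[n] ↑z) ∈ V :=
    (OnePoint.continuous_coe.continuousAt (x := z₀)).eventually hec
  rw [Metric.eventually_nhds_iff] at hec'
  obtain ⟨ε, hε0, hεV⟩ := hec'
  -- pick a witness point
  set δ := min ε r / 2 with hδ
  have hδ0 : 0 < δ := by positivity
  set y := z₀ + δ with hy
  have hdisty : dist y z₀ = δ := by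
    simp [hy, dist_eq_norm, abs_of_pos hδ0, Complex.norm_real]
  have hyε : dist y z₀ < ε := by
    rw [hdisty]; have : δ < min ε r := by rw [hδ]; linarith [lt_min hε0 hr0]
    exact this.trans_le (min_le_left _ _)
  have hyr : dist y z₀ < r := by
    rw [hdisty]; have : δ < min ε r := by rw [hδ]; linarith [lt_min hε0 hr0]
    exact this.trans_le (min_le_right _ _)
  obtain ⟨m, hmfar, hmiter⟩ := key y (hdisty ▸ hδ0) hyr
  have := hεV hyε m
  rw [hfixn m] at this
  have h2 : f^[m] (↑y : OnePoint ℂ) ∈ (fun z : ℂ => (z : OnePoint ℂ)) '' ball z₀ r := hVsub this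
  rw [hmiter] at h2
  obtain ⟨w, hw, hweq⟩ := h2
  rw [OnePoint.coe_injective hweq] at hw
  exact absurd hw (by simpa [mem_ball] using hmfar)
end

section
/- (Koenigs linearization) Let f : ℂ → ℂ be analytic at z₀ with f z₀ = z₀ and a := deriv f z₀ satisfying 0 < |a| < 1. Then there exist r > 0 and a function g : ℂ → ℂ analytic on the open ball B(z₀, r) such that f maps B(z₀, r) into itself, g z₀ = 0, deriv g z₀ = 1, g is injective on B(z₀, r), and g (f z) = a * g z for every z ∈ B(z₀, r). -/
open Set Metric Filter

set_option maxHeartbeats 2000000 in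
theorem koenigs_linearization
    (f : ℂ → ℂ) (z₀ : ℂ) (hf : AnalyticAt ℂ f z₀) (hfix : f z₀ = z₀)
    (a : ℂ) (ha : a = deriv f z₀)
    (ha0 : 0 < ‖a‖) (ha1 : ‖a‖ < 1) :
    ∃ r : ℝ, 0 < r ∧ ∃ g : ℂ → ℂ,
      AnalyticOnNhd ℂ g (Metric.ball z₀ r) ∧
      Set.MapsTo f (Metric.ball z₀ r) (Metric.ball z₀ r) ∧
      g z₀ = 0 ∧ deriv g z₀ = 1 ∧ Set.InjOn g (Metric.ball z₀ r) ∧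
      ∀ z ∈ Metric.ball z₀ r, g (f z) = a * g z := by
  have hane : a ≠ 0 := by
    intro h; rw [h] at ha0; simp at ha0
  set b : ℝ := ‖a‖ with hbdef
  have hb0 : 0 < b := ha0
  have hb1 : b < 1 := ha1
  have hnorm_a : ‖a‖ = b := rfl
  -- choose c with b < c < sqrt b < 1
  have hsq : Real.sqrt b * Real.sqrt b = b := Real.mul_self_sqrt hb0.le
  have hs0 : 0 < Real.sqrt b := Real.sqrt_pos.mpr hb0
  have hs1 : Real.sqrt b < 1 := by nlinarith
  have hbs : b < Real.sqrt b := by nlinarith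
  set c : ℝ := (b + Real.sqrt b) / 2 with hcdef
  have hbc : b < c := by rw [hcdef]; linarith
  have hc0 : 0 < c := lt_trans hb0 hbc
  have hc1 : c < 1 := by rw [hcdef]; linarith
  have hcs : c < Real.sqrt b := by rw [hcdef]; linarith
  have hcsq : c ^ 2 < b := by nlinarith
  clear_value c
  -- quadratic Taylor bound
  obtain ⟨p, hp⟩ := id hf
  have hcoeff0 : p.coeff 0 = z₀ := by
    have h := hp.coeff_zero 1
    rw [hfix] at h
    exact h
  have hcoeff1 : p.coeff 1 = a := by
    rw [ha, hp.deriv]; rfl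
  have hpartial : ∀ y : ℂ, p.partialSum 2 y = z₀ + a * y := by
    intro y
    simp [FormalMultilinearSeries.partialSum, Finset.sum_range_succ,
      FormalMultilinearSeries.apply_eq_pow_smul_coeff, hcoeff0, hcoeff1, smul_eq_mul]
    ring
  have hO := hp.isBigO_sub_partialSum_pow 2
  rw [Asymptotics.isBigO_iff] at hO
  obtain ⟨C, hC⟩ := hO
  set M : ℝ := max C 1 with hMdef
  have hM0 : 0 < M := lt_of_lt_of_le one_pos (le_max_right _ _)
  have hCM : C ≤ M := le_max_left _ _
  have hC' : ∀ᶠ y in nhds (0 : ℂ), ‖f (z₀ + y) - (z₀ + a * y)‖ ≤ M * ‖y‖ ^ 2 := by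
    filter_upwards [hC] with y hy
    rw [hpartial] at hy
    calc ‖f (z₀ + y) - (z₀ + a * y)‖ ≤ C * ‖(‖y‖ ^ 2 : ℝ)‖ := hy
      _ ≤ M * ‖y‖ ^ 2 := by
          rw [Real.norm_eq_abs, abs_of_nonneg (by positivity)]
          nlinarith [sq_nonneg ‖y‖, hCM]
  rw [Metric.eventually_nhds_iff] at hC'
  obtain ⟨δ, hδ0, hδ⟩ := hC'
  clear_value M
  have hquad : ∀ z : ℂ, dist z z₀ < δ → ‖f z - z₀ - a * (z - z₀)‖ ≤ M * ‖z - z₀‖ ^ 2 := by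
    intro z hz
    have h := hδ (y := z - z₀) (by simpa [dist_eq_norm] using hz)
    have h1 : z₀ + (z - z₀) = z := by ring
    rw [h1] at h
    have h2 : f z - (z₀ + a * (z - z₀)) = f z - z₀ - a * (z - z₀) := by ring
    rwa [h2] at h
  -- analyticity neighborhood
  have hev := hf.eventually_analyticAt
  rw [Metric.eventually_nhds_iff] at hev
  obtain ⟨ρ, hρ0, hρ⟩ := hev
  -- radius r₀
  set r₀ : ℝ := min (min δ ρ) ((c - b) / M) / 2 with hr₀def
  have hr₀pos : 0 < r₀ := by
    have : 0 < min (min δ ρ) ((c - b) / M) :=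
      lt_min (lt_min hδ0 hρ0) (div_pos (by linarith) hM0)
    rw [hr₀def]; linarith
  have hr₀δ : r₀ < δ := by
    have h1 : min (min δ ρ) ((c - b) / M) ≤ δ := le_trans (min_le_left _ _) (min_le_left _ _)
    rw [hr₀def]; linarith
  have hr₀ρ : r₀ < ρ := by
    have h1 : min (min δ ρ) ((c - b) / M) ≤ ρ := le_trans (min_le_left _ _) (min_le_right _ _)
    rw [hr₀def]; linarith
  have hMr₀ : M * r₀ ≤ c - b := by
    have h1 : r₀ ≤ (c - b) / M := by
      have := min_le_right (min δ ρ) ((c - b) / M); rw [hr₀def]; linarith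
    calc M * r₀ ≤ M * ((c - b) / M) := by nlinarith
      _ = c - b := by field_simp
  clear_value r₀
  -- quadratic bound on the ball
  have hquad' : ∀ z ∈ ball z₀ r₀, ‖f z - z₀ - a * (z - z₀)‖ ≤ M * ‖z - z₀‖ ^ 2 :=
    fun z hz => hquad z (lt_trans hz hr₀δ)
  have hnormlt : ∀ z ∈ ball z₀ r₀, ‖z - z₀‖ < r₀ := by
    intro z hz; rw [← dist_eq_norm]; exact hz
  -- linear contraction bound
  have hlin : ∀ z ∈ ball z₀ r₀, ‖f z - z₀‖ ≤ c * ‖z - z₀‖ := by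
    intro z hz
    have h1 := hquad' z hz
    have h2 : ‖f z - z₀‖ ≤ ‖f z - z₀ - a * (z - z₀)‖ + ‖a * (z - z₀)‖ := by
      calc ‖f z - z₀‖ = ‖(f z - z₀ - a * (z - z₀)) + a * (z - z₀)‖ := by ring_nf
        _ ≤ _ := norm_add_le _ _
    have h3 : ‖a * (z - z₀)‖ = b * ‖z - z₀‖ := by rw [norm_mul, hnorm_a]
    have h4 : ‖z - z₀‖ < r₀ := hnormlt z hz
    have e1 : M * ‖z - z₀‖ ≤ c - b := by nlinarith
    have e2 : M * ‖z - z₀‖ * ‖z - z₀‖ ≤ (c - b) * ‖z - z₀‖ :=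
      mul_le_mul_of_nonneg_right e1 (norm_nonneg _)
    nlinarith [norm_nonneg (z - z₀)]
  -- iterate bounds
  have hiter : ∀ z ∈ ball z₀ r₀, ∀ n, ‖f^[n] z - z₀‖ ≤ c ^ n * ‖z - z₀‖ := by
    intro z hz n
    induction n with
    | zero => simp
    | succ n ih =>
      have hcn : c ^ n ≤ 1 := pow_le_one₀ hc0.le hc1.le
      have hmem : f^[n] z ∈ ball z₀ r₀ := by
        rw [mem_ball, dist_eq_norm]
        calc ‖f^[n] z - z₀‖ ≤ c ^ n * ‖z - z₀‖ := ih
          _ ≤ 1 * ‖z - z₀‖ := by nlinarith [norm_nonneg (z - z₀)]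
          _ < r₀ := by rw [one_mul]; exact hnormlt z hz
      rw [Function.iterate_succ_apply']
      calc ‖f (f^[n] z) - z₀‖ ≤ c * ‖f^[n] z - z₀‖ := hlin _ hmem
        _ ≤ c * (c ^ n * ‖z - z₀‖) := by nlinarith
        _ = c ^ (n + 1) * ‖z - z₀‖ := by ring
  have hmemball : ∀ z ∈ ball z₀ r₀, ∀ n, f^[n] z ∈ ball z₀ r₀ := by
    intro z hz n
    have hcn : c ^ n ≤ 1 := pow_le_one₀ hc0.le hc1.le
    rw [mem_ball, dist_eq_norm]
    calc ‖f^[n] z - z₀‖ ≤ c ^ n * ‖z - z₀‖ := hiter z hz n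
      _ ≤ 1 * ‖z - z₀‖ := by nlinarith [norm_nonneg (z - z₀)]
      _ < r₀ := by rw [one_mul]; exact hnormlt z hz
  have hmaps : Set.MapsTo f (ball z₀ r₀) (ball z₀ r₀) := by
    intro z hz
    have := hmemball z hz 1
    simpa using this
  -- differentiability of iterates
  have hfd : DifferentiableOn ℂ f (ball z₀ r₀) := by
    intro z hz
    exact (hρ (lt_trans hz hr₀ρ)).differentiableAt.differentiableWithinAt
  have hiterd : ∀ n, DifferentiableOn ℂ (f^[n]) (ball z₀ r₀) := by
    intro n
    induction n with
    | zero => simpa using differentiableOn_id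
    | succ n ih =>
      rw [Function.iterate_succ']
      exact hfd.comp ih (fun z hz => hmemball z hz n)
  -- the approximating sequence
  set g : ℕ → ℂ → ℂ := fun n z => (f^[n] z - z₀) / a ^ n with hgdef
  have hgd : ∀ n, DifferentiableOn ℂ (g n) (ball z₀ r₀) :=
    fun n => ((hiterd n).sub_const z₀).div_const _
  set ψ : ℕ → ℂ → ℂ := fun k z => g (k + 1) z - g k z with hψdef
  set u : ℕ → ℝ := fun k => (M * r₀ ^ 2 / b) * (c ^ 2 / b) ^ k with hudef
  have hu : Summable u := by
    apply Summable.mul_left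
    apply summable_geometric_of_lt_one (by positivity)
    rw [div_lt_one hb0]; exact hcsq
  have hψbound : ∀ k : ℕ, ∀ z ∈ ball z₀ r₀, ‖ψ k z‖ ≤ u k := by
    intro k z hz
    have hwmem : f^[k] z ∈ ball z₀ r₀ := hmemball z hz k
    set w : ℂ := f^[k] z with hwdef
    have hψeq : ψ k z = (f w - z₀ - a * (w - z₀)) / a ^ (k + 1) := by
      rw [hψdef]
      simp only [hgdef]
      rw [Function.iterate_succ_apply', ← hwdef]
      rw [pow_succ]
      field_simp
    have hnum : ‖f w - z₀ - a * (w - z₀)‖ ≤ M * (c ^ k * r₀) ^ 2 := by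
      have h1 := hquad' w hwmem
      have h2 : ‖w - z₀‖ ≤ c ^ k * r₀ := by
        calc ‖w - z₀‖ ≤ c ^ k * ‖z - z₀‖ := hiter z hz k
          _ ≤ c ^ k * r₀ := by
              exact mul_le_mul_of_nonneg_left (hnormlt z hz).le (by positivity)
      calc ‖f w - z₀ - a * (w - z₀)‖ ≤ M * ‖w - z₀‖ ^ 2 := h1
        _ ≤ M * (c ^ k * r₀) ^ 2 := by
            have h3 : ‖w - z₀‖ ^ 2 ≤ (c ^ k * r₀) ^ 2 :=
              pow_le_pow_left₀ (norm_nonneg _) h2 2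
            exact mul_le_mul_of_nonneg_left h3 hM0.le
    have hden : ‖(a : ℂ) ^ (k + 1)‖ = b ^ (k + 1) := by rw [norm_pow, hnorm_a]
    rw [hψeq, norm_div, hden]
    have hval : M * (c ^ k * r₀) ^ 2 / b ^ (k + 1) = u k := by
      simp only [hudef]
      have h4 : (c ^ k * r₀) ^ 2 = (c ^ 2) ^ k * r₀ ^ 2 := by
        rw [mul_pow, ← pow_mul, ← pow_mul, mul_comm k 2]
      rw [h4, div_pow, pow_succ]
      have hbk : (b : ℝ) ^ k ≠ 0 := by positivity
      field_simp
      ring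
    rw [← hval]
    gcongr
  have hg_eq : ∀ n z, g n z = (z - z₀) + ∑ k ∈ Finset.range n, ψ k z := by
    intro n z
    have htel : ∑ k ∈ Finset.range n, ψ k z = g n z - g 0 z := by
      simp only [hψdef]
      exact Finset.sum_range_sub (fun k => g k z) n
    have hg0 : g 0 z = z - z₀ := by simp [hgdef]
    rw [htel, hg0]; ring
  set G : ℂ → ℂ := fun z => (z - z₀) + ∑' k, ψ k z with hGdef
  have htsum : TendstoUniformlyOn (fun N z => ∑ k ∈ Finset.range N, ψ k z)
      (fun z => ∑' k, ψ k z) atTop (ball z₀ r₀) :=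
    tendstoUniformlyOn_tsum_nat hu (fun k z hz => hψbound k z hz)
  have hid : TendstoUniformlyOn (fun (_ : ℕ) (z : ℂ) => z - z₀) (fun z => z - z₀)
      atTop (ball z₀ r₀) := by
    intro v hv
    exact Eventually.of_forall fun n x _ => refl_mem_uniformity hv
  have hGtu : TendstoUniformlyOn g G atTop (ball z₀ r₀) := by
    have h := hid.add htsum
    apply h.congr
    exact Eventually.of_forall fun n z hz => (hg_eq n z).symm
  have h_pt : ∀ z ∈ ball z₀ r₀, Tendsto (fun n => g n z) atTop (nhds (G z)) :=
    fun z hz => hGtu.tendsto_at hz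
  have hlocu := hGtu.tendstoLocallyUniformlyOn
  have hGdiff : DifferentiableOn ℂ G (ball z₀ r₀) :=
    hlocu.differentiableOn (Eventually.of_forall hgd) isOpen_ball
  have hGanal : AnalyticOnNhd ℂ G (ball z₀ r₀) := hGdiff.analyticOnNhd isOpen_ball
  have hz₀s : z₀ ∈ ball z₀ r₀ := mem_ball_self hr₀pos
  have hiterfix : ∀ n, f^[n] z₀ = z₀ := fun n => Function.iterate_fixed hfix n
  have hG0 : G z₀ = 0 := by
    have h1 : ∀ n, g n z₀ = 0 := by
      intro n; simp [hgdef, hiterfix n]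
    have h2 : Tendsto (fun n => g n z₀) atTop (nhds 0) := by
      simp only [h1]; exact tendsto_const_nhds
    exact tendsto_nhds_unique (h_pt z₀ hz₀s) h2
  -- derivative
  have hfa : HasDerivAt f a z₀ := by
    have h := hf.differentiableAt.hasDerivAt
    rwa [← ha] at h
  have hiterderiv : ∀ n, HasDerivAt (f^[n]) (a ^ n) z₀ := by
    intro n
    induction n with
    | zero => simpa using hasDerivAt_id z₀
    | succ n ih =>
      rw [Function.iterate_succ']
      have hfa' : HasDerivAt f a (f^[n] z₀) := by rw [hiterfix n]; exact hfa
      have h := HasDerivAt.comp z₀ hfa' ih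
      rw [pow_succ']
      exact h
  have hgderiv : ∀ n, deriv (g n) z₀ = 1 := by
    intro n
    have h : HasDerivAt (g n) (a ^ n / a ^ n) z₀ :=
      ((hiterderiv n).sub_const z₀).div_const _
    rw [div_self (pow_ne_zero n hane)] at h
    exact h.deriv
  have hder := hlocu.deriv (Eventually.of_forall hgd) isOpen_ball
  have hGd1 : deriv G z₀ = 1 := by
    have h1 : Tendsto (fun n => deriv (g n) z₀) atTop (nhds (deriv G z₀)) :=
      hder.tendsto_at hz₀s
    have h2 : Tendsto (fun n => deriv (g n) z₀) atTop (nhds 1) := by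
      simp only [hgderiv]; exact tendsto_const_nhds
    exact tendsto_nhds_unique h1 h2
  -- functional equation
  have heq : ∀ z ∈ ball z₀ r₀, G (f z) = a * G z := by
    intro z hz
    have hz1 : f z ∈ ball z₀ r₀ := hmaps hz
    have h1 : Tendsto (fun n => g n (f z)) atTop (nhds (G (f z))) := h_pt _ hz1
    have h3 : ∀ n, g n (f z) = a * g (n + 1) z := by
      intro n
      simp only [hgdef]
      rw [← Function.iterate_succ_apply, pow_succ]
      have hak : (a : ℂ) ^ n ≠ 0 := pow_ne_zero n hane
      field_simp
    have h2 : Tendsto (fun n => a * g (n + 1) z) atTop (nhds (a * G z)) :=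
      ((h_pt z hz).comp (tendsto_add_atTop_nat 1)).const_mul a
    have h1' : Tendsto (fun n => a * g (n + 1) z) atTop (nhds (G (f z))) := by
      simpa only [h3] using h1
    exact tendsto_nhds_unique h1' h2
  -- injectivity near z₀
  obtain ⟨q, hq⟩ := hGanal z₀ hz₀s
  have hqc : (q 1 fun _ => 1) = 1 := by rw [← hq.deriv, hGd1]
  have hstrict : HasStrictDerivAt G 1 z₀ := hqc ▸ hq.hasStrictDerivAt
  have hlit := hstrict.hasStrictFDerivAt
  rw [hasStrictFDerivAt_iff_isLittleO] at hlit
  have h2 := hlit.def one_half_pos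
  rw [Metric.eventually_nhds_iff] at h2
  obtain ⟨ε, hε0, hε⟩ := h2
  have hinj : Set.InjOn G (ball z₀ ε) := by
    intro x hx y hy hxy
    have hd : dist (x, y) (z₀, z₀) < ε := by
      rw [Prod.dist_eq]
      exact max_lt hx hy
    have h5 := hε hd
    simp only [hxy, sub_self, zero_sub, norm_neg, ContinuousLinearMap.smulRight_apply,
      ContinuousLinearMap.one_apply, smul_eq_mul, mul_one,
      ContinuousLinearMap.toSpanSingleton_apply] at h5
    have h6 : ‖x - y‖ ≤ 1 / 2 * ‖x - y‖ := h5
    have h7 : ‖x - y‖ = 0 := by nlinarith [norm_nonneg (x - y)]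
    exact sub_eq_zero.mp (norm_eq_zero.mp h7)
  -- final radius
  refine ⟨min r₀ ε, lt_min hr₀pos hε0, G, ?_, ?_, hG0, hGd1, ?_, ?_⟩
  · exact hGanal.mono (ball_subset_ball (min_le_left _ _))
  · intro z hz
    have hz' : z ∈ ball z₀ r₀ := ball_subset_ball (min_le_left _ _) hz
    rw [mem_ball, dist_eq_norm]
    have h1 : ‖f z - z₀‖ ≤ c * ‖z - z₀‖ := hlin z hz'
    have h2 : ‖z - z₀‖ < min r₀ ε := by rw [← dist_eq_norm]; exact hz
    nlinarith [norm_nonneg (z - z₀)]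
  · exact hinj.mono (ball_subset_ball (min_le_right _ _))
  · intro z hz
    exact heq z (ball_subset_ball (min_le_left _ _) hz)
end

section
/- Let f be a rational map of the Riemann sphere of degree d ≥ 2 determined by coprime polynomials P, Q with R z = eval z P / eval z Q. Suppose z₀, z₁, …, z_{m−1} ∈ ℂ form a cycle of length m ≥ 1: eval z_j Q ≠ 0 and R z_j = z_{(j+1) mod m} for all j. If the multiplier λ = ∏_{j<m} deriv R z_j is a root of unity (λ^k = 1 for some k ≥ 1), then ↑z₀ belongs to the Julia set J(f). In particular every rationally indifferent cycle of a rational map of degree at least two lies in the Julia set. -/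
open Polynomial Set Metric Filter MeasureTheory

open scoped Topology Uniformity

namespace RIJ

lemma no_common_root {P Q : Polynomial ℂ} (hPQ : IsCoprime P Q) (a : ℂ)
    (hP : P.eval a = 0) (hQ : Q.eval a = 0) : False := by
  obtain ⟨u, v, huv⟩ := hPQ
  have h := congrArg (Polynomial.eval a) huv
  simp [hP, hQ] at h

lemma f_pole {P Q : Polynomial ℂ} {f : OnePoint ℂ → OnePoint ℂ}
    (hf : Continuous f) (hPQ : IsCoprime P Q) (hQ0 : Q ≠ 0)
    (hfPQ : ∀ z : ℂ, Q.eval z ≠ 0 → f (z : OnePoint ℂ) = ((P.eval z / Q.eval z : ℂ) : OnePoint ℂ))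
    {w : ℂ} (hw : Q.eval w = 0) : f (w : OnePoint ℂ) = OnePoint.infty := by
  have hPw : P.eval w ≠ 0 := fun h => no_common_root hPQ w h hw
  set s : Set ℂ := {x | Q.eval x ≠ 0} with hs
  -- 𝓝[s] w is non-trivial
  have hroots : {x : ℂ | Q.eval x = 0}.Finite := Polynomial.finite_setOf_isRoot hQ0
  have ht : ({x : ℂ | Q.eval x = 0} \ {w})ᶜ ∈ 𝓝 w := by
    refine (hroots.subset diff_subset).isClosed.isOpen_compl.mem_nhds ?_
    simp
  have hne1 : 𝓝[({w}ᶜ : Set ℂ) ∩ ({x : ℂ | Q.eval x = 0} \ {w})ᶜ] w = 𝓝[≠] w :=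
    nhdsWithin_inter_of_mem' (nhdsWithin_le_nhds ht)
  have hsub : ({w}ᶜ : Set ℂ) ∩ ({x : ℂ | Q.eval x = 0} \ {w})ᶜ ⊆ s := by
    intro x hx
    simp only [mem_inter_iff, mem_compl_iff, mem_singleton_iff, mem_diff, mem_setOf_eq] at hx ⊢
    tauto
  have hneBot : (𝓝[s] w).NeBot := by
    refine Filter.neBot_of_le (f := 𝓝[≠] w) ?_
    rw [← hne1]
    exact nhdsWithin_mono _ hsub
  -- f ∘ coe tends to f ↑w
  have h1 : Tendsto (fun x : ℂ => f (x : OnePoint ℂ)) (𝓝[s] w) (𝓝 (f (w : OnePoint ℂ))) :=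
    ((hf.comp OnePoint.continuous_coe).continuousAt).continuousWithinAt
  -- P/Q tends to ∞
  have hnorm : Tendsto (fun x : ℂ => ‖P.eval x / Q.eval x‖) (𝓝[s] w) atTop := by
    have hQpos : Tendsto (fun x : ℂ => ‖Q.eval x‖) (𝓝[s] w) (𝓝[>] (0:ℝ)) := by
      rw [tendsto_nhdsWithin_iff]
      constructor
      · have := (Q.continuous.norm).continuousAt (x := w)
        rw [ContinuousAt, hw] at this
        simpa using this.mono_left nhdsWithin_le_nhds
      · filter_upwards [self_mem_nhdsWithin] with x hx
        exact norm_pos_iff.mpr hx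
    have hinv : Tendsto (fun x : ℂ => ‖Q.eval x‖⁻¹) (𝓝[s] w) atTop :=
      tendsto_inv_nhdsGT_zero.comp hQpos
    have hnum : Tendsto (fun x : ℂ => ‖P.eval x‖) (𝓝[s] w) (𝓝 ‖P.eval w‖) :=
      ((P.continuous.norm).continuousAt).continuousWithinAt
    have := hnum.pos_mul_atTop (norm_pos_iff.mpr hPw) hinv
    simpa [div_eq_mul_inv, norm_mul, norm_inv] using this
  have h2 : Tendsto (fun x : ℂ => ((P.eval x / Q.eval x : ℂ) : OnePoint ℂ)) (𝓝[s] w)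
      (𝓝 (OnePoint.infty)) := by
    refine OnePoint.tendsto_coe_infty.comp ?_
    rw [Filter.coclosedCompact_eq_cocompact, ← Metric.cobounded_eq_cocompact,
      ← tendsto_norm_atTop_iff_cobounded]
    exact hnorm
  have h2' : Tendsto (fun x : ℂ => f (x : OnePoint ℂ)) (𝓝[s] w) (𝓝 (OnePoint.infty)) := by
    refine h2.congr' ?_
    filter_upwards [self_mem_nhdsWithin] with x hx
    exact (hfPQ x hx).symm
  exact tendsto_nhds_unique h1 h2'

lemma indep {P Q : Polynomial ℂ} (hPQ : IsCoprime P Q)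
    (hne : ¬(P.natDegree = 0 ∧ Q.natDegree = 0)) (hQ0 : Q ≠ 0)
    {c1 c2 : ℂ} (h : C c1 * P = C c2 * Q) : c1 = 0 ∧ c2 = 0 := by
  by_cases hc1 : c1 = 0
  · refine ⟨hc1, ?_⟩
    by_contra hc2
    rw [hc1, map_zero, zero_mul] at h
    rcases mul_eq_zero.1 h.symm with h' | h'
    · exact hc2 (by simpa using h')
    · exact hQ0 h'
  · exfalso
    have hdvd : Q ∣ C c1 * P := ⟨C c2, by rw [h, mul_comm]⟩
    have hdQ : Q.natDegree = 0 := by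
      have := Polynomial.natDegree_le_of_dvd (hPQ.symm.dvd_of_dvd_mul_right hdvd)
        (Polynomial.C_ne_zero.mpr hc1)
      simpa using this
    have hdP : P.natDegree = 0 := by
      have h1 : (C c1 * P).natDegree = P.natDegree :=
        Polynomial.natDegree_C_mul_eq_of_mul_eq_one (inv_mul_cancel₀ hc1)
      have h2 : (C c2 * Q).natDegree ≤ 0 := by
        refine le_trans Polynomial.natDegree_mul_le ?_
        simp [hdQ]
      rw [h] at h1
      omega
    exact hne ⟨hdP, hdQ⟩
noncomputable def homIt (P Q : Polynomial ℂ) (d : ℕ) : ℕ → Polynomial ℂ × Polynomial ℂ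
  | 0 => (Polynomial.X, 1)
  | n+1 =>
    (∑ i ∈ Finset.range (d+1),
        Polynomial.C (P.coeff i) * (homIt P Q d n).1 ^ i * (homIt P Q d n).2 ^ (d - i),
     ∑ i ∈ Finset.range (d+1),
        Polynomial.C (Q.coeff i) * (homIt P Q d n).1 ^ i * (homIt P Q d n).2 ^ (d - i))

lemma homogenize_eval {S : Polynomial ℂ} {d : ℕ} (hd : S.natDegree ≤ d) (a b : ℂ) (hb : b ≠ 0) :
    (∑ i ∈ Finset.range (d+1), S.coeff i * a ^ i * b ^ (d - i)) = b ^ d * S.eval (a / b) := by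
  rw [Polynomial.eval_eq_sum_range' (lt_of_le_of_lt hd (Nat.lt_succ_self d)), Finset.mul_sum]
  refine Finset.sum_congr rfl fun i hi => ?_
  have hid : i ≤ d := Nat.lt_succ_iff.mp (Finset.mem_range.mp hi)
  have hb2 : b ^ d = b ^ (d - i) * b ^ i := (pow_sub_mul_pow b hid).symm
  have hbi : (b : ℂ) ^ i ≠ 0 := pow_ne_zero _ hb
  rw [div_pow, hb2]
  field_simp

end RIJ

theorem rationallyIndifferent_cycle_mem_juliaSet
    (f : OnePoint ℂ → OnePoint ℂ) (d : ℕ) (hd : 2 ≤ d)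
    (P Q : Polynomial ℂ) (hf : Continuous f) (hPQ : IsCoprime P Q)
    (hne : ¬(P.natDegree = 0 ∧ Q.natDegree = 0)) (hQ : Q ≠ 0)
    (hdeg : d = max P.natDegree Q.natDegree)
    (hfPQ : ∀ z : ℂ, Q.eval z ≠ 0 → f (z : OnePoint ℂ) = ((P.eval z / Q.eval z : ℂ) : OnePoint ℂ))
    (R : ℂ → ℂ) (hR : ∀ z : ℂ, R z = P.eval z / Q.eval z)
    (m : ℕ) (hm : 1 ≤ m) (z : ℕ → ℂ)
    (hQz : ∀ j < m, Q.eval (z j) ≠ 0)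
    (hcyc : ∀ j < m, R (z j) = z ((j + 1) % m))
    (k : ℕ) (hk : 1 ≤ k)
    (hroot : (∏ j ∈ Finset.range m, deriv R (z j)) ^ k = 1) :
    (z 0 : OnePoint ℂ) ∈ JuliaSet f := by
  classical
  have hm0 : 0 < m := hm
  have horb : ∀ j, R^[j] (z 0) = z (j % m) := by
    intro j
    induction j with
    | zero => simp [Nat.zero_mod]
    | succ j ih =>
      rw [Function.iterate_succ_apply', ih, hcyc (j % m) (Nat.mod_lt _ hm0)]
      congr 1
      exact Nat.mod_add_mod j m 1 ▸ rfl
  have hQorb : ∀ j, Q.eval (R^[j] (z 0)) ≠ 0 := fun j => by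
    rw [horb j]; exact hQz _ (Nat.mod_lt _ hm0)
  have hforb : ∀ n, f^[n] ((z 0 : ℂ) : OnePoint ℂ) = ((R^[n] (z 0) : ℂ) : OnePoint ℂ) := by
    intro n
    induction n with
    | zero => simp
    | succ n ih =>
      rw [Function.iterate_succ_apply', ih, hfPQ _ (hQorb n), Function.iterate_succ_apply',
        ← hR]
  rw [JuliaSet, Set.mem_compl_iff]
  intro hFatou
  obtain ⟨U, hUopen, hUmem, hEq⟩ := hFatou
  -- a bound on the cycle
  set M : ℝ := (Finset.range m).sup' ⟨0, Finset.mem_range.mpr hm0⟩ (fun j => ‖z j‖) + 1 with hM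
  have hMz : ∀ j < m, ‖z j‖ < M := fun j hj =>
    lt_of_le_of_lt (Finset.le_sup' (f := fun j => ‖z j‖) (Finset.mem_range.mpr hj)) (lt_add_one _)
  set O : Set (OnePoint ℂ) := ((↑) : ℂ → OnePoint ℂ) '' (Metric.ball 0 M) with hO
  have hOopen : IsOpen O := OnePoint.isOpen_image_coe.mpr Metric.isOpen_ball
  have hOmem : ∀ j < m, ((z j : ℂ) : OnePoint ℂ) ∈ O := fun j hj =>
    ⟨z j, by simpa [mem_ball_zero_iff] using hMz j hj, rfl⟩
  -- an entourage whose balls around the cycle are inside O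
  have hV : ∃ V ∈ 𝓤 (OnePoint ℂ), ∀ j < m, UniformSpace.ball ((z j : ℂ) : OnePoint ℂ) V ⊆ O := by
    choose V hV1 hV2 using fun (j : Fin m) =>
      (UniformSpace.mem_nhds_iff (α := OnePoint ℂ)).mp (hOopen.mem_nhds (hOmem j j.2))
    refine ⟨⋂ j : Fin m, V j, (Filter.iInter_mem).mpr hV1, ?_⟩
    intro j hj x hx
    refine hV2 ⟨j, hj⟩ ?_
    exact Set.mem_iInter.mp hx ⟨j, hj⟩
  obtain ⟨V, hVU, hVO⟩ := hV
  have hev := hEq _ hUmem V hVU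
  rw [hUopen.nhdsWithin_eq hUmem] at hev
  have hev2 : ∀ᶠ y in 𝓝 ((z 0 : ℂ) : OnePoint ℂ), ∀ n : ℕ, f^[n] y ∈ O := by
    filter_upwards [hev] with y hy n
    have h1 := hy n
    rw [hforb n, horb n] at h1
    exact hVO (n % m) (Nat.mod_lt _ hm0) h1
  rw [OnePoint.nhds_coe_eq, Filter.eventually_map] at hev2
  obtain ⟨r, hr0, hball⟩ := Metric.eventually_nhds_iff_ball.mp hev2
  -- pointwise control on the ball
  have key : ∀ x ∈ Metric.ball (z 0) r, ∀ n : ℕ,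
      Q.eval (R^[n] x) ≠ 0 ∧ f^[n] ((x : OnePoint ℂ)) = ((R^[n] x : ℂ) : OnePoint ℂ)
        ∧ ‖R^[n] x‖ < M := by
    intro x hx n
    induction n with
    | zero =>
      refine ⟨?_, by simp, ?_⟩
      · intro hQx
        have h1 : f^[1] ((x : OnePoint ℂ)) = OnePoint.infty := by
          simpa using RIJ.f_pole hf hPQ hQ hfPQ hQx
        have h2 := hball x hx 1
        rw [h1] at h2
        exact OnePoint.infty_notMem_image_coe h2
      · have h2 := hball x hx 0
        simp only [Function.iterate_zero_apply] at h2
        obtain ⟨y, hy, he⟩ := h2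
        rw [OnePoint.coe_eq_coe] at he
        subst he
        simpa [mem_ball_zero_iff] using hy
    | succ n ih =>
      obtain ⟨hQn, hfn, hMn⟩ := ih
      have hfn1 : f^[n+1] ((x : OnePoint ℂ)) = ((R^[n+1] x : ℂ) : OnePoint ℂ) := by
        rw [Function.iterate_succ_apply', hfn, hfPQ _ hQn, Function.iterate_succ_apply', ← hR]
      refine ⟨?_, hfn1, ?_⟩
      · intro hQn1
        have h1 : f^[n+2] ((x : OnePoint ℂ)) = OnePoint.infty := by
          rw [Function.iterate_succ_apply', hfn1]
          exact RIJ.f_pole hf hPQ hQ hfPQ hQn1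
        have h2 := hball x hx (n+2)
        rw [h1] at h2
        exact OnePoint.infty_notMem_image_coe h2
      · have h2 := hball x hx (n+1)
        rw [hfn1] at h2
        obtain ⟨y, hy, he⟩ := h2
        rw [OnePoint.coe_eq_coe] at he
        subst he
        simpa [mem_ball_zero_iff] using hy
  
  have hz0ball : z 0 ∈ Metric.ball (z 0) r := Metric.mem_ball_self hr0
  have hRdiffAt : ∀ w : ℂ, Q.eval w ≠ 0 → DifferentiableAt ℂ R w := by
    intro w hw
    have h1 : DifferentiableAt ℂ (fun x : ℂ => P.eval x / Q.eval x) w :=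
      P.differentiableAt.div Q.differentiableAt hw
    exact h1.congr_of_eventuallyEq (Filter.Eventually.of_forall fun x => (hR x))
  have hRanAt : ∀ w : ℂ, Q.eval w ≠ 0 → AnalyticAt ℂ R w := by
    intro w hw
    have h1 : AnalyticAt ℂ (fun x : ℂ => P.eval x / Q.eval x) w :=
      ((AnalyticOnNhd.eval_polynomial (𝕜 := ℂ) P) w trivial).div
        ((AnalyticOnNhd.eval_polynomial (𝕜 := ℂ) Q) w trivial) hw
    exact h1.congr (Filter.Eventually.of_forall fun x => (hR x).symm)
  have hiterDiff : ∀ n : ℕ, ∀ x ∈ Metric.ball (z 0) r, DifferentiableAt ℂ (R^[n]) x := by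
    intro n
    induction n with
    | zero => intro x _; simpa using differentiableAt_id'
    | succ n ih =>
      intro x hx
      rw [Function.iterate_succ']
      exact (hRdiffAt _ ((key x hx n).1)).comp x (ih x hx)
  have hiterAn : ∀ n : ℕ, AnalyticAt ℂ (R^[n]) (z 0) := by
    intro n
    induction n with
    | zero => rw [Function.iterate_zero]; exact analyticAt_id
    | succ n ih =>
      rw [Function.iterate_succ']
      exact (hRanAt _ ((key _ hz0ball n).1)).comp ih
  have hfix : R^[m] (z 0) = z 0 := by rw [horb m, Nat.mod_self]
  have hchain : ∀ j ≤ m, HasDerivAt (R^[j]) (∏ i ∈ Finset.range j, deriv R (z i)) (z 0) := by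
    intro j
    induction j with
    | zero => intro _; simpa using hasDerivAt_id (z 0)
    | succ j ih =>
      intro hj1
      have hj : j < m := hj1
      have h0 : R^[j] (z 0) = z j := by rw [horb j, Nat.mod_eq_of_lt hj]
      have h1 : HasDerivAt R (deriv R (z j)) (R^[j] (z 0)) := by
        rw [h0]; exact (hRdiffAt _ (hQz j hj)).hasDerivAt
      have h2 := h1.comp (z 0) (ih (le_of_lt hj))
      rw [Function.iterate_succ', Finset.prod_range_succ]
      rw [mul_comm]; exact h2
  set lam := ∏ j ∈ Finset.range m, deriv R (z j) with hlam
  have hRm : HasDerivAt (R^[m]) lam (z 0) := hchain m le_rfl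
  have hgk : ∀ K : ℕ, HasDerivAt ((R^[m])^[K]) (lam ^ K) (z 0) := by
    intro K
    induction K with
    | zero => simpa using hasDerivAt_id (z 0)
    | succ K ih =>
      have hfixK : (R^[m])^[K] (z 0) = z 0 := Function.iterate_fixed hfix K
      have h1 : HasDerivAt (R^[m]) lam ((R^[m])^[K] (z 0)) := by rw [hfixK]; exact hRm
      have h2 := h1.comp (z 0) ih
      rw [Function.iterate_succ']
      rw [pow_succ']; exact h2
  set N := m * k with hN
  have hNpos : 0 < N := Nat.mul_pos hm0 hk
  set g : ℂ → ℂ := R^[N] with hg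
  have hgiter : ∀ n : ℕ, g^[n] = R^[N * n] := by
    intro n; rw [hg, ← Function.iterate_mul]
  have hgfix : g (z 0) = z 0 := by
    rw [hg, hN, Function.iterate_mul]; exact Function.iterate_fixed hfix k
  have hgd : HasDerivAt g 1 (z 0) := by
    rw [hg, hN, Function.iterate_mul]
    have := hgk k
    rwa [hroot] at this
  have hgAn : AnalyticAt ℂ g (z 0) := hiterAn N
  set phi : ℂ → ℂ := fun w => g w - w with hphi
  have hphiAn : AnalyticAt ℂ phi (z 0) := hgAn.sub analyticAt_id
  have hphi0 : phi (z 0) = 0 := by simp [hphi, hgfix]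
  by_cases hident : ∀ᶠ w in 𝓝 (z 0), phi w = 0
  · -- identity branch : R^[N] = id near z 0 forces degree ≤ 1, contradiction
    obtain ⟨e, he0, hept⟩ := Metric.eventually_nhds_iff_ball.mp hident
    set A : ℕ → Polynomial ℂ := fun n => (RIJ.homIt P Q d n).1 with hA
    set B : ℕ → Polynomial ℂ := fun n => (RIJ.homIt P Q d n).2 with hB
    have hA0 : A 0 = Polynomial.X := rfl
    have hB0 : B 0 = 1 := rfl
    have hdP : P.natDegree ≤ d := hdeg ▸ le_max_left _ _
    have hdQ : Q.natDegree ≤ d := hdeg ▸ le_max_right _ _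
    have hevAB : ∀ n x, Polynomial.eval x (B n) ≠ 0 →
        Polynomial.eval x (A n) / Polynomial.eval x (B n) = R^[n] x →
        Polynomial.eval x (B (n+1)) = (Polynomial.eval x (B n)) ^ d * Q.eval (R^[n] x) ∧
        Polynomial.eval x (A (n+1)) = (Polynomial.eval x (B n)) ^ d * P.eval (R^[n] x) := by
      intro n x hb hr'
      constructor
      · show Polynomial.eval x (RIJ.homIt P Q d (n+1)).2 = _
        rw [RIJ.homIt]
        simp only [Polynomial.eval_finset_sum, Polynomial.eval_mul, Polynomial.eval_pow,
          Polynomial.eval_C]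
        rw [RIJ.homogenize_eval hdQ _ _ hb, hr']
      · show Polynomial.eval x (RIJ.homIt P Q d (n+1)).1 = _
        rw [RIJ.homIt]
        simp only [Polynomial.eval_finset_sum, Polynomial.eval_mul, Polynomial.eval_pow,
          Polynomial.eval_C]
        rw [RIJ.homogenize_eval hdP _ _ hb, hr']
    have chain : ∀ (x : ℂ) (n : ℕ), (∀ j ≤ n, Polynomial.eval x (B j) ≠ 0) →
        Polynomial.eval x (A n) / Polynomial.eval x (B n) = R^[n] x ∧
        (∀ j < n, Q.eval (R^[j] x) ≠ 0) := by
      intro x n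
      induction n with
      | zero =>
        intro _
        refine ⟨by simp [hA0, hB0], fun j hj => absurd hj (by omega)⟩
      | succ n ih =>
        intro h
        have hBn : Polynomial.eval x (B n) ≠ 0 := h n (by omega)
        obtain ⟨hratio, hQch⟩ := ih (fun j hj => h j (by omega))
        obtain ⟨hBev, hAev⟩ := hevAB n x hBn hratio
        have hQn : Q.eval (R^[n] x) ≠ 0 := by
          intro h0
          have hB1 := h (n+1) le_rfl
          rw [hBev, h0, mul_zero] at hB1
          exact hB1 rfl
        refine ⟨?_, ?_⟩
        · rw [hAev, hBev, mul_div_mul_left _ _ (pow_ne_zero d hBn), ← hR,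
            Function.iterate_succ_apply']
        · intro j hj
          rcases Nat.lt_succ_iff_lt_or_eq.mp hj with h' | h'
          · exact hQch j h'
          · rw [h']; exact hQn
    -- B j does not vanish on the ball
    have hBball : ∀ x ∈ Metric.ball (z 0) r, ∀ j, ∀ i ≤ j, Polynomial.eval x (B i) ≠ 0 := by
      intro x hx j
      induction j with
      | zero =>
        intro i hi
        have : i = 0 := by omega
        rw [this, hB0]
        simp
      | succ j ih =>
        intro i hi
        by_cases h' : i ≤ j
        · exact ih i h'
        · have h'' : i = j + 1 := by omega
          rw [h'']
          obtain ⟨hratio, _⟩ := chain x j ih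
          obtain ⟨hBev, _⟩ := hevAB j x (ih j le_rfl) hratio
          rw [hBev]
          exact mul_ne_zero (pow_ne_zero _ (ih j le_rfl)) ((key x hx j).1)
    have hBne : ∀ j, B j ≠ 0 := by
      intro j h0
      exact hBball (z 0) hz0ball j j le_rfl (by rw [h0, Polynomial.eval_zero])
    -- the polynomial identity A N = X * B N
    have hAXB : A N = Polynomial.X * B N := by
      have hr'0 : 0 < min r e := lt_min hr0 he0
      have hsub : Metric.ball (z 0) (min r e) ⊆ {x : ℂ | (A N - Polynomial.X * B N).IsRoot x} := by
        intro x hx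
        have hx_r : x ∈ Metric.ball (z 0) r :=
          Metric.ball_subset_ball (min_le_left _ _) hx
        have hx_e : x ∈ Metric.ball (z 0) e :=
          Metric.ball_subset_ball (min_le_right _ _) hx
        have hRN : R^[N] x = x := by
          have h1 := hept x hx_e
          have h2 : g x - x = 0 := h1
          rw [hg] at h2
          exact sub_eq_zero.mp h2
        have hBx : ∀ i ≤ N, Polynomial.eval x (B i) ≠ 0 := hBball x hx_r N
        have hch := (chain x N hBx).1
        have hbn := hBx N le_rfl
        have : Polynomial.eval x (A N) = x * Polynomial.eval x (B N) := by
          rw [div_eq_iff hbn] at hch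
          rw [hch, hRN]
        show Polynomial.eval x (A N - Polynomial.X * B N) = 0
        rw [Polynomial.eval_sub, Polynomial.eval_mul, Polynomial.eval_X, this, sub_self]
      have hinf : {x : ℂ | (A N - Polynomial.X * B N).IsRoot x}.Infinite :=
        (infinite_of_mem_nhds (z 0) (Metric.ball_mem_nhds _ hr'0)).mono hsub
      have h0 := Polynomial.eq_zero_of_infinite_isRoot _ hinf
      rw [sub_eq_zero] at h0
      exact h0
    -- the cofinite set where all the B j are nonzero
    set S : Set ℂ := {x | ∀ j ≤ N, Polynomial.eval x (B j) ≠ 0} with hS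
    have hSfin : Sᶜ.Finite := by
      have hsub : Sᶜ ⊆ ⋃ j ∈ Finset.range (N+1), {x : ℂ | (B j).IsRoot x} := by
        intro x hx
        rw [hS] at hx
        simp only [Set.mem_compl_iff, Set.mem_setOf_eq, not_forall, Classical.not_imp,
          not_not] at hx
        obtain ⟨j, hj, hj0⟩ := hx
        have hjN : j ∈ Finset.range (N+1) := Finset.mem_range.mpr (by omega)
        exact Set.mem_biUnion hjN hj0
      exact (Set.Finite.biUnion (Finset.range (N+1)).finite_toSet
        (fun j _ => Polynomial.finite_setOf_isRoot (hBne j))).subset hsub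
    have hSinf : S.Infinite := by
      have := hSfin.infinite_compl
      rwa [compl_compl] at this
    have hSid : ∀ x ∈ S, R^[N] x = x := by
      intro x hx
      have hch := (chain x N hx).1
      have hb := hx N le_rfl
      rw [hAXB, Polynomial.eval_mul, Polynomial.eval_X, mul_div_assoc, div_self hb, mul_one]
        at hch
      exact hch.symm
    have hSQ : ∀ x ∈ S, Q.eval x ≠ 0 := by
      intro x hx
      have h1 := (chain x N hx).2 0 hNpos
      simpa using h1
    have hSinj : ∀ x ∈ S, ∀ y ∈ S, R x = R y → x = y := by
      intro x hx y hy hxy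
      have hNN : N = (N - 1) + 1 := by omega
      have h1 : R^[N-1] (R x) = x := by
        have ht := hSid x hx
        rw [hNN, Function.iterate_succ_apply] at ht
        exact ht
      have h2 : R^[N-1] (R y) = y := by
        have ht := hSid y hy
        rw [hNN, Function.iterate_succ_apply] at ht
        exact ht
      rw [← h1, ← h2, hxy]
    -- now the degree ≥ 2 contradiction
    have hP0 : P ≠ 0 := by
      intro h0
      rw [h0] at hPQ
      have h1 : IsUnit Q := isCoprime_zero_left.mp hPQ
      exact hne ⟨by simp [h0], Polynomial.natDegree_eq_zero_of_isUnit h1⟩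
    set L : Polynomial ℂ := Polynomial.C (P.coeff d) * Q - Polynomial.C (Q.coeff d) * P with hL
    have hL0 : L ≠ 0 := by
      intro h0
      rw [hL, sub_eq_zero] at h0
      have hcc := RIJ.indep hPQ.symm (fun hh => hne ⟨hh.2, hh.1⟩) hP0 h0
      have hone : P.natDegree = d ∨ Q.natDegree = d := by
        rcases le_total P.natDegree Q.natDegree with h | h
        · right; rw [hdeg, max_eq_right h]
        · left; rw [hdeg, max_eq_left h]
      rcases hone with h | h
      · have : P.coeff d ≠ 0 := by
          rw [← h]
          exact Polynomial.leadingCoeff_ne_zero.mpr hP0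
        exact this hcc.1
      · have : Q.coeff d ≠ 0 := by
          rw [← h]
          exact Polynomial.leadingCoeff_ne_zero.mpr hQ
        exact this hcc.2
    set W : Polynomial ℂ := Q * Polynomial.derivative P - P * Polynomial.derivative Q with hW
    have hW0 : W ≠ 0 := by
      intro h0
      rw [hW, sub_eq_zero] at h0
      have hPdvd : P ∣ Polynomial.derivative P := by
        have h1 : P ∣ Q * Polynomial.derivative P := ⟨Polynomial.derivative Q, by rw [h0]⟩
        exact hPQ.dvd_of_dvd_mul_left h1
      have hP' : Polynomial.derivative P = 0 := by
        by_contra hP'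
        by_cases hPd : P.natDegree = 0
        · obtain ⟨c, hc⟩ := Polynomial.natDegree_eq_zero.mp hPd
          rw [← hc] at hP'
          simp at hP'
        · have h2 := Polynomial.natDegree_le_of_dvd hPdvd hP'
          have h3 := Polynomial.natDegree_derivative_lt hPd
          omega
      have hQ' : Polynomial.derivative Q = 0 := by
        have h3 : P * Polynomial.derivative Q = 0 := by rw [← h0, hP', mul_zero]
        rcases mul_eq_zero.mp h3 with h | h
        · exact absurd h hP0
        · exact h
      exact hne ⟨Polynomial.natDegree_eq_zero_of_derivative_eq_zero hP',
        Polynomial.natDegree_eq_zero_of_derivative_eq_zero hQ'⟩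
    set H : ℂ → Polynomial ℂ :=
      fun b => Polynomial.C (P.eval b) * Q - Polynomial.C (Q.eval b) * P with hH
    have hH0 : ∀ b : ℂ, H b ≠ 0 := by
      intro b h0
      rw [hH] at h0
      rw [sub_eq_zero] at h0
      have hcc := RIJ.indep hPQ.symm (fun hh => hne ⟨hh.2, hh.1⟩) hP0 h0
      exact RIJ.no_common_root hPQ b hcc.1 hcc.2
    have hbadfin : ({x : ℂ | W.IsRoot x} ∪ {x : ℂ | L.IsRoot x} ∪
        ⋃ b ∈ Sᶜ, {x : ℂ | (H b).IsRoot x}).Finite := by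
      refine (Set.Finite.union (Set.Finite.union ?_ ?_) ?_)
      · exact Polynomial.finite_setOf_isRoot hW0
      · exact Polynomial.finite_setOf_isRoot hL0
      · exact Set.Finite.biUnion hSfin fun b _ => Polynomial.finite_setOf_isRoot (hH0 b)
    obtain ⟨a, haS, haBad⟩ : ∃ a, a ∈ S ∧ a ∉ ({x : ℂ | W.IsRoot x} ∪ {x : ℂ | L.IsRoot x} ∪
        ⋃ b ∈ Sᶜ, {x : ℂ | (H b).IsRoot x}) := by
      obtain ⟨a, ha⟩ := (hSinf.diff hbadfin).nonempty
      exact ⟨a, ha.1, ha.2⟩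
    have haQ : Q.eval a ≠ 0 := hSQ a haS
    have haW : ¬ W.IsRoot a := fun h => haBad (Or.inl (Or.inl h))
    have haL : ¬ L.IsRoot a := fun h => haBad (Or.inl (Or.inr h))
    have haH : ∀ b ∈ Sᶜ, ¬ (H b).IsRoot a := by
      intro b hb h
      exact haBad (Or.inr (Set.mem_biUnion hb h))
    set Ga : Polynomial ℂ := Polynomial.C (Q.eval a) * P - Polynomial.C (P.eval a) * Q with hGa
    have hGa0 : Ga ≠ 0 := by
      intro h0
      rw [hGa, sub_eq_zero] at h0
      exact haQ (RIJ.indep hPQ hne hQ h0).1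
    have hcoeffd : Ga.coeff d = Polynomial.eval a L := by
      rw [hGa, hL]
      simp only [Polynomial.coeff_sub, Polynomial.coeff_C_mul, Polynomial.eval_sub,
        Polynomial.eval_mul, Polynomial.eval_C]
      ring
    have hdled : d ≤ Ga.natDegree := by
      refine Polynomial.le_natDegree_of_ne_zero ?_
      rw [hcoeffd]
      exact haL
    have hroots_sub : ∀ b : ℂ, Ga.IsRoot b → b = a := by
      intro b hb
      have hbeq : Q.eval a * P.eval b = P.eval a * Q.eval b := by
        have h1 : Polynomial.eval b Ga = 0 := hb
        rw [hGa] at h1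
        simp only [Polynomial.eval_sub, Polynomial.eval_mul, Polynomial.eval_C] at h1
        linear_combination h1
      have hQb : Q.eval b ≠ 0 := by
        intro h0
        have h1 : Q.eval a * P.eval b = 0 := by rw [hbeq, h0, mul_zero]
        rcases mul_eq_zero.mp h1 with h | h
        · exact haQ h
        · exact RIJ.no_common_root hPQ b h h0
      have hbS : b ∈ S := by
        by_contra hbS
        refine haH b hbS ?_
        show Polynomial.eval a (H b) = 0
        rw [hH]
        simp only [Polynomial.eval_sub, Polynomial.eval_mul, Polynomial.eval_C]
        linear_combination hbeq
      have hRba : R b = R a := by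
        rw [hR, hR, div_eq_div_iff hQb haQ]
        linear_combination hbeq
      exact hSinj b hbS a haS hRba
    have hcard : Multiset.card Ga.roots = Ga.natDegree :=
      Polynomial.splits_iff_card_roots.mp (IsAlgClosed.splits Ga)
    have hrepl : Ga.roots = Multiset.replicate Ga.natDegree a := by
      refine Multiset.eq_replicate.mpr ⟨hcard, ?_⟩
      intro b hb
      exact hroots_sub b (Polynomial.isRoot_of_mem_roots hb)
    have hsplit : Polynomial.C Ga.leadingCoeff * (Polynomial.X - Polynomial.C a) ^ Ga.natDegree
        = Ga := by
      have h1 := Polynomial.C_leadingCoeff_mul_prod_multiset_X_sub_C hcard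
      rw [hrepl, Multiset.map_replicate, Multiset.prod_replicate] at h1
      exact h1
    have hWa : Polynomial.eval a W = 0 := by
      have h1 : Polynomial.eval a (Polynomial.derivative Ga) = 0 := by
        rw [← hsplit, Polynomial.derivative_C_mul, Polynomial.derivative_pow]
        simp only [Polynomial.derivative_sub, Polynomial.derivative_X, Polynomial.derivative_C,
          sub_zero, mul_one, Polynomial.eval_mul, Polynomial.eval_natCast, Polynomial.eval_pow,
          Polynomial.eval_sub, Polynomial.eval_X, Polynomial.eval_C, sub_self]
        rw [zero_pow (by omega : Ga.natDegree - 1 ≠ 0)]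
        ring
      have h2 : Polynomial.derivative Ga =
          Polynomial.C (Q.eval a) * Polynomial.derivative P -
            Polynomial.C (P.eval a) * Polynomial.derivative Q := by
        rw [hGa]
        simp [Polynomial.derivative_sub, Polynomial.derivative_C_mul]
      rw [h2] at h1
      simp only [Polynomial.eval_sub, Polynomial.eval_mul, Polynomial.eval_C] at h1
      rw [hW]
      simp only [Polynomial.eval_sub, Polynomial.eval_mul]
      linear_combination h1
    exact haW hWa
  · -- non-identity branch : finite order ≥ 2 and growth of Taylor coefficient
    have horder : analyticOrderAt phi (z 0) ≠ ⊤ := by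
      intro h
      exact hident (analyticOrderAt_eq_top.mp h)
    obtain ⟨p, hp⟩ : ∃ p : ℕ, analyticOrderAt phi (z 0) = p := ⟨(analyticOrderAt phi (z 0)).toNat, (ENat.coe_toNat horder).symm⟩
    obtain ⟨psi, hpsiAn, hpsi0, hfact⟩ := hphiAn.analyticOrderAt_eq_natCast.mp hp
    have hderiv0 : deriv phi (z 0) = 0 := by
      have h1 : HasDerivAt phi 0 (z 0) := by
        have := hgd.sub (hasDerivAt_id (z 0))
        rw [sub_self] at this
        exact this
      exact h1.deriv
    have hp2 : 2 ≤ p := by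
      rcases Nat.lt_or_ge p 2 with h | h
      · exfalso
        interval_cases p
        · have h0 := hfact.self_of_nhds
          rw [hphi0] at h0
          simp at h0
          exact hpsi0 h0.symm
        · have h1 : HasDerivAt (fun w => (w - z 0) ^ 1 • psi w) (psi (z 0)) (z 0) := by
            have hd := ((hasDerivAt_id (z 0)).sub_const (z 0)).mul
              (hpsiAn.differentiableAt.hasDerivAt)
            simp only [pow_one, smul_eq_mul]
            exact hd.congr_deriv (by simp)
          have h2 : deriv phi (z 0) = psi (z 0) := by
            rw [Filter.EventuallyEq.deriv_eq hfact]
            exact h1.deriv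
          rw [hderiv0] at h2
          exact hpsi0 h2.symm
      · exact h
    have hp1 : 1 ≤ p := by omega
    have hgiterfix : ∀ n : ℕ, g^[n] (z 0) = z 0 := fun n => Function.iterate_fixed hgfix n
    have hpsplit : p = (p - 1) + 1 := by omega
    -- the coefficient grows linearly
    have main : ∀ n : ℕ, ∃ pn : ℂ → ℂ, AnalyticAt ℂ pn (z 0) ∧
        pn (z 0) = ((n : ℂ) + 1) * psi (z 0) ∧
        ∀ᶠ w in 𝓝 (z 0), g^[n+1] w - w = (w - z 0) ^ p * pn w := by
      intro n
      induction n with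
      | zero =>
        refine ⟨psi, hpsiAn, by simp, ?_⟩
        filter_upwards [hfact] with w hw
        simpa [hphi, smul_eq_mul] using hw
      | succ n ih =>
        obtain ⟨pn, hpnAn, hpn0, hpnfact⟩ := ih
        have hgAn1 : AnalyticAt ℂ (g^[n+1]) (z 0) := by rw [hgiter]; exact hiterAn _
        have hout : AnalyticAt ℂ psi (g^[n+1] (z 0)) := by rw [hgiterfix]; exact hpsiAn
        have h3 : AnalyticAt ℂ (fun w => psi (g^[n+1] w)) (z 0) := hout.comp hgAn1
        have h1 : AnalyticAt ℂ (fun w => (w - z 0) ^ (p-1) * pn w) (z 0) :=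
          ((analyticAt_id.sub analyticAt_const).pow _).mul hpnAn
        have h2 : AnalyticAt ℂ (fun w => (1 + (w - z 0) ^ (p-1) * pn w) ^ p) (z 0) :=
          (analyticAt_const.add h1).pow _
        refine ⟨fun w => pn w + (1 + (w - z 0) ^ (p-1) * pn w) ^ p * psi (g^[n+1] w),
          hpnAn.add (h2.mul h3), ?_, ?_⟩
        · have hz : ((z 0 : ℂ) - z 0) ^ (p - 1) = 0 := by
            rw [sub_self]
            exact zero_pow (by omega)
          simp only [hz, zero_mul, add_zero, one_pow, one_mul, hpn0, hgiterfix]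
          push_cast
          ring
        · have hev' : ∀ᶠ w in 𝓝 (z 0),
              phi (g^[n+1] w) = (g^[n+1] w - z 0) ^ p • psi (g^[n+1] w) := by
            have htd : Filter.Tendsto (g^[n+1]) (𝓝 (z 0)) (𝓝 (z 0)) := by
              have := hgAn1.continuousAt
              rwa [ContinuousAt, hgiterfix] at this
            exact htd.eventually hfact
          filter_upwards [hpnfact, hev'] with w h1w h2w
          have hsp : g^[n+1+1] w = g (g^[n+1] w) := Function.iterate_succ_apply' g (n+1) w
          have hphiw : g (g^[n+1] w) - g^[n+1] w = (g^[n+1] w - z 0) ^ p * psi (g^[n+1] w) := by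
            simpa [hphi, smul_eq_mul] using h2w
          have hgw : g^[n+1] w = (w - z 0) ^ p * pn w + w := by
            have := h1w
            linear_combination this
          have hpow : (w - z 0) ^ p = (w - z 0) * (w - z 0) ^ (p-1) := by
            conv_lhs => rw [hpsplit, pow_succ]
            ring
          have hsub : g^[n+1] w - z 0 = (w - z 0) * (1 + (w - z 0) ^ (p-1) * pn w) := by
            rw [hgw, hpow]; ring
          calc g^[n+1+1] w - w
              = ((w - z 0) ^ p * pn w) + (g (g^[n+1] w) - g^[n+1] w) := by
                rw [hsp, ← h1w]; ring
            _ = (w - z 0) ^ p * pn w + (g^[n+1] w - z 0) ^ p * psi (g^[n+1] w) := by rw [hphiw]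
            _ = (w - z 0) ^ p *
                (pn w + (1 + (w - z 0) ^ (p-1) * pn w) ^ p * psi (g^[n+1] w)) := by
                rw [hsub, mul_pow]; ring
    -- uniform bound on iterates minus identity
    set C : ℝ := M + (‖z 0‖ + r) with hCdef
    have hub : ∀ n : ℕ, ∀ w ∈ Metric.ball (z 0) r, ‖g^[n+1] w - w‖ ≤ C := by
      intro n w hw
      have h1 : ‖g^[n+1] w‖ < M := by
        rw [hgiter]
        exact (key w hw _).2.2
      have h2 : ‖w‖ < ‖z 0‖ + r := by
        have h3 := mem_ball_iff_norm.mp hw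
        calc ‖w‖ = ‖(w - z 0) + z 0‖ := by ring_nf
          _ ≤ ‖w - z 0‖ + ‖z 0‖ := norm_add_le _ _
          _ < r + ‖z 0‖ := by linarith
          _ = ‖z 0‖ + r := by ring
      calc ‖g^[n+1] w - w‖ ≤ ‖g^[n+1] w‖ + ‖w‖ := norm_sub_le _ _
        _ ≤ C := by rw [hCdef]; linarith
    have hr2 : (0:ℝ) < r / 2 := by linarith
    -- the key estimate
    have hbound : ∀ n : ℕ, ((n : ℝ) + 1) * ‖psi (z 0)‖ ≤ C / (r/2) ^ p := by
      intro n
      obtain ⟨pn, hpnAn, hpn0, hpnfact⟩ := main n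
      set u : ℂ → ℂ := fun w => g^[n+1] w - w with hu
      have hudiff : DifferentiableOn ℂ u (Metric.ball (z 0) r) := by
        intro x hx
        have h1 : DifferentiableAt ℂ (g^[n+1]) x := by
          rw [hgiter]; exact hiterDiff _ x hx
        exact (h1.sub differentiableAt_id).differentiableWithinAt
      set D : ℕ → (ℂ → ℂ) := fun j => (fun h => dslope h (z 0))^[j] u with hDdef
      have hDstep : ∀ j, D (j+1) = dslope (D j) (z 0) :=
        fun j => Function.iterate_succ_apply' _ j u
      have hDdiff : ∀ j, DifferentiableOn ℂ (D j) (Metric.ball (z 0) r) := by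
        intro j
        induction j with
        | zero => exact hudiff
        | succ j ih =>
          rw [hDstep]
          exact (Complex.differentiableOn_dslope (Metric.ball_mem_nhds _ hr0)).mpr ih
      have hDcont : ∀ j, ContinuousAt (D j) (z 0) :=
        fun j => ((hDdiff j).differentiableAt (Metric.ball_mem_nhds _ hr0)).continuousAt
      -- off-center formula and values at center
      have hDoff : ∀ j ≤ p, ∀ w : ℂ, w ≠ z 0 → D j w = u w / (w - z 0) ^ j := by
        intro j
        induction j with
        | zero =>
          intro _ w _
          rw [hDdef]
          simp
        | succ j ih =>
          intro hjp w hw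
          have hjp' : j ≤ p := by omega
          have hjlt : j < p := by omega
          -- D j (z 0) = 0
          have hDj0 : D j (z 0) = 0 := by
            have hlim1 : Filter.Tendsto (D j) (𝓝[≠] (z 0)) (𝓝 (D j (z 0))) :=
              ((hDcont j).continuousWithinAt)
            have hlim2 : Filter.Tendsto (D j) (𝓝[≠] (z 0)) (𝓝 0) := by
              have hcong : ∀ᶠ w in 𝓝[≠] (z 0), (w - z 0) ^ (p - j) * pn w = D j w := by
                filter_upwards [eventually_nhdsWithin_of_eventually_nhds hpnfact,
                  self_mem_nhdsWithin] with x hx hx'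
                rw [ih hjp' x hx']
                have hxne : (x - z 0) ≠ 0 := sub_ne_zero.mpr hx'
                have hux : u x = (x - z 0) ^ j * ((x - z 0) ^ (p - j) * pn x) := by
                  show g^[n+1] x - x = _
                  rw [hx, ← mul_assoc, ← pow_add]
                  congr 2
                  omega
                rw [hux, mul_div_cancel_left₀ _ (pow_ne_zero _ hxne)]
              have hlim3 : Filter.Tendsto (fun w => (w - z 0) ^ (p - j) * pn w)
                  (𝓝 (z 0)) (𝓝 0) := by
                have hc : ContinuousAt (fun w => (w - z 0) ^ (p - j) * pn w) (z 0) :=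
                  (((continuous_id.sub continuous_const).pow _).continuousAt).mul
                    hpnAn.continuousAt
                have hval : ((z 0 : ℂ) - z 0) ^ (p - j) * pn (z 0) = 0 := by
                  rw [sub_self, zero_pow (by omega : p - j ≠ 0), zero_mul]
                rw [ContinuousAt, hval] at hc
                exact hc
              exact Filter.Tendsto.congr' hcong (hlim3.mono_left nhdsWithin_le_nhds)
            exact tendsto_nhds_unique hlim1 hlim2
          rw [hDstep, dslope_of_ne _ hw, slope_def_field, hDj0, sub_zero,
            ih hjp' w hw, div_div, ← pow_succ]
      -- value at the center
      have hDp0 : D p (z 0) = ((n : ℂ) + 1) * psi (z 0) := by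
        have hlim1 : Filter.Tendsto (D p) (𝓝[≠] (z 0)) (𝓝 (D p (z 0))) :=
          ((hDcont p).continuousWithinAt)
        have hlim2 : Filter.Tendsto (D p) (𝓝[≠] (z 0)) (𝓝 (((n : ℂ) + 1) * psi (z 0))) := by
          have hcong : ∀ᶠ w in 𝓝[≠] (z 0), pn w = D p w := by
            filter_upwards [eventually_nhdsWithin_of_eventually_nhds hpnfact,
              self_mem_nhdsWithin] with x hx hx'
            rw [hDoff p le_rfl x hx']
            have hxne : ((x - z 0) : ℂ) ^ p ≠ 0 := pow_ne_zero _ (sub_ne_zero.mpr hx')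
            show pn x = (g^[n+1] x - x) / (x - z 0) ^ p
            rw [hx, mul_div_cancel_left₀ _ hxne]
          have hlim3 : Filter.Tendsto pn (𝓝 (z 0)) (𝓝 (((n : ℂ) + 1) * psi (z 0))) := by
            have := hpnAn.continuousAt
            rwa [ContinuousAt, hpn0] at this
          exact Filter.Tendsto.congr' hcong (hlim3.mono_left nhdsWithin_le_nhds)
        exact tendsto_nhds_unique hlim1 hlim2
      -- maximum modulus estimate on the disc of radius r/2
      have hmax : ‖D p (z 0)‖ ≤ C / (r/2) ^ p := by
        have hUb : Bornology.IsBounded (Metric.ball (z 0) (r/2)) := Metric.isBounded_ball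
        have hclos : closure (Metric.ball (z 0) (r/2)) = Metric.closedBall (z 0) (r/2) :=
          closure_ball _ (ne_of_gt hr2)
        have hsubs : Metric.closedBall (z 0) (r/2) ⊆ Metric.ball (z 0) r :=
          Metric.closedBall_subset_ball (by linarith)
        have hdc : DiffContOnCl ℂ (D p) (Metric.ball (z 0) (r/2)) := by
          constructor
          · exact (hDdiff p).mono (Metric.ball_subset_ball (by linarith))
          · rw [hclos]
            exact ((hDdiff p).continuousOn).mono hsubs
        have hfr : ∀ w ∈ frontier (Metric.ball (z 0) (r/2)), ‖D p w‖ ≤ C / (r/2) ^ p := by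
          intro w hw
          rw [frontier_ball _ (ne_of_gt hr2)] at hw
          have hwn : ‖w - z 0‖ = r / 2 := mem_sphere_iff_norm.mp hw
          have hwne : w ≠ z 0 := by
            intro h; rw [h, sub_self, norm_zero] at hwn; linarith
          have hwball : w ∈ Metric.ball (z 0) r := by
            rw [Metric.mem_ball, dist_eq_norm, hwn]; linarith
          rw [hDoff p le_rfl w hwne, norm_div, norm_pow, hwn]
          have huw : ‖u w‖ ≤ C := hub n w hwball
          have hden : (0:ℝ) < (r/2) ^ p := pow_pos hr2 p
          gcongr
        exact Complex.norm_le_of_forall_mem_frontier_norm_le hUb hdc hfr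
          (by rw [hclos]; exact Metric.mem_closedBall_self (le_of_lt hr2))
      rw [hDp0] at hmax
      have hcast : ‖((n : ℂ) + 1)‖ = (n : ℝ) + 1 := by
        rw [show ((n : ℂ) + 1) = ((n + 1 : ℕ) : ℂ) by push_cast; ring, Complex.norm_natCast]
        push_cast
        ring
      rw [norm_mul, hcast] at hmax
      exact hmax
    -- contradiction
    obtain ⟨n, hn⟩ := exists_nat_gt ((C / (r/2) ^ p) / ‖psi (z 0)‖)
    have h1 := hbound n
    have hpsipos : 0 < ‖psi (z 0)‖ := norm_pos_iff.mpr hpsi0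
    have h2 : (C / (r/2) ^ p) / ‖psi (z 0)‖ < (n : ℝ) + 1 := by linarith
    rw [div_lt_iff₀ hpsipos] at h2
    linarith
end

section
/- Let f be a rational map of the Riemann sphere of degree d ≥ 2 determined by coprime polynomials P, Q, and let z₀ ∈ ℂ satisfy eval z₀ Q ≠ 0, R z₀ = z₀ and |deriv R z₀| < 1, where R z = eval z P / eval z Q. Let A = {w ∈ OnePoint ℂ | the sequence n ↦ f^[n] w tends to ↑z₀} be the basin of attraction of z₀. Then the topological frontier of A equals the Julia set: ∂A = J(f). -/
open Polynomial Set Metric Filter MeasureTheory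
open OnePoint Topology Bornology Uniformity

namespace FBJ


noncomputable def sphInv (c : ℂ) (u : OnePoint ℂ) : ℂ :=
  u.elim 0 (fun v => (v - c)⁻¹)

noncomputable def sphChart (c : ℂ) (ζ : ℂ) : OnePoint ℂ :=
  if ζ = 0 then ∞ else ((c + ζ⁻¹ : ℂ) : OnePoint ℂ)

@[simp] lemma sphInv_coe (c v : ℂ) : sphInv c (v : OnePoint ℂ) = (v - c)⁻¹ := rfl
@[simp] lemma sphInv_infty (c : ℂ) : sphInv c ∞ = 0 := rfl
@[simp] lemma sphChart_zero (c : ℂ) : sphChart c 0 = ∞ := if_pos rfl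
lemma sphChart_of_ne (c : ℂ) {ζ : ℂ} (h : ζ ≠ 0) :
    sphChart c ζ = ((c + ζ⁻¹ : ℂ) : OnePoint ℂ) := if_neg h

lemma sphChart_ne_coe_self (c : ℂ) (ζ : ℂ) : sphChart c ζ ≠ (c : OnePoint ℂ) := by
  rcases eq_or_ne ζ 0 with h | h
  · simp [h]
  · rw [sphChart_of_ne c h]
    intro hc
    have : c + ζ⁻¹ = c := OnePoint.coe_injective hc
    exact h (by simpa [inv_eq_zero] using (add_eq_left.mp this))

lemma sphChart_sphInv {c : ℂ} {u : OnePoint ℂ} (h : u ≠ (c : OnePoint ℂ)) :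
    sphChart c (sphInv c u) = u := by
  induction u using OnePoint.rec with
  | infty => simp [sphChart]
  | coe v =>
    have hv : v ≠ c := fun hvc => h (by rw [hvc])
    have hvc : v - c ≠ 0 := sub_ne_zero.mpr hv
    rw [sphInv_coe, sphChart_of_ne c (by simpa using hvc)]
    congr 1
    field_simp
    ring

@[simp] lemma sphInv_sphChart (c : ℂ) (ζ : ℂ) : sphInv c (sphChart c ζ) = ζ := by
  rcases eq_or_ne ζ 0 with h | h
  · simp [h]
  · rw [sphChart_of_ne c h]; simp

lemma continuous_sphChart (c : ℂ) : Continuous (sphChart c) := by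
  rw [continuous_iff_continuousAt]
  intro ζ
  rcases eq_or_ne ζ 0 with rfl | hζ
  · unfold ContinuousAt
    rw [sphChart_zero, ← nhdsNE_sup_pure, tendsto_sup]
    constructor
    · have h1 : Tendsto (fun ζ : ℂ => c + ζ⁻¹) (𝓝[≠] (0:ℂ)) (coclosedCompact ℂ) := by
        rw [coclosedCompact_eq_cocompact, ← cobounded_eq_cocompact,
          ← tendsto_norm_atTop_iff_cobounded]
        have h2 : Tendsto (fun ζ : ℂ => ‖ζ⁻¹‖) (𝓝[≠] (0:ℂ)) atTop := by
          simpa [Function.comp_def] using tendsto_inv_nhdsGT_zero.comp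
            (tendsto_norm_nhdsNE_zero (E := ℂ))
        refine tendsto_atTop_mono' _ ?_ (tendsto_atTop_add_const_left _ (-‖c‖) h2)
        filter_upwards with ζ
        show -‖c‖ + ‖ζ⁻¹‖ ≤ ‖c + ζ⁻¹‖
        have h := norm_add_le (c + ζ⁻¹) (-c)
        rw [add_comm c ζ⁻¹, add_assoc, add_neg_cancel, add_zero, add_comm ζ⁻¹ c, norm_neg] at h
        linarith
      have h3 : Tendsto (fun ζ : ℂ => ((c + ζ⁻¹ : ℂ) : OnePoint ℂ)) (𝓝[≠] (0:ℂ)) (𝓝 ∞) :=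
        OnePoint.tendsto_coe_infty.comp h1
      refine h3.congr' ?_
      filter_upwards [self_mem_nhdsWithin] with ζ' (hζ' : ζ' ≠ 0)
      rw [sphChart_of_ne c hζ']
    · simpa using tendsto_pure_nhds (sphChart c) 0
  · have : ContinuousAt (fun ζ : ℂ => ((c + ζ⁻¹ : ℂ) : OnePoint ℂ)) ζ :=
      (OnePoint.continuous_coe.continuousAt).comp
        ((continuousAt_const.add (continuousAt_inv₀ hζ)))
    refine this.congr ?_
    filter_upwards [isOpen_compl_singleton.mem_nhds hζ] with ζ' (h : ζ' ≠ 0)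
    exact (sphChart_of_ne c h).symm

lemma continuousAt_sphInv {c : ℂ} {u : OnePoint ℂ} (h : u ≠ (c : OnePoint ℂ)) :
    ContinuousAt (sphInv c) u := by
  induction u using OnePoint.rec with
  | infty =>
    rw [OnePoint.continuousAt_infty']
    have : Tendsto (fun v : ℂ => (v - c)⁻¹) (coclosedCompact ℂ) (𝓝 0) := by
      rw [coclosedCompact_eq_cocompact, ← cobounded_eq_cocompact]
      have h1 : Tendsto (fun v : ℂ => v - c) (cobounded ℂ) (cobounded ℂ) := by
        rw [← tendsto_norm_atTop_iff_cobounded]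
        refine tendsto_atTop_mono' _ ?_
          (tendsto_atTop_add_const_right _ (-‖c‖) tendsto_norm_cobounded_atTop)
        filter_upwards with v
        show ‖v‖ + -‖c‖ ≤ ‖v - c‖
        have := norm_sub_norm_le v c
        linarith
      exact tendsto_inv₀_cobounded.comp h1
    simpa [Function.comp_def] using this
  | coe v =>
    have hv : v - c ≠ 0 := sub_ne_zero.mpr (fun hvc => h (by rw [hvc]))
    rw [OnePoint.continuousAt_coe]
    exact ((continuousAt_id.sub continuousAt_const).inv₀ hv)


section Core

variable {f : OnePoint ℂ → OnePoint ℂ} {P Q : Polynomial ℂ}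

lemma base1 (hf : Continuous f) (hQ : Q ≠ 0)
    (hfPQ : ∀ z : ℂ, Q.eval z ≠ 0 → f (z : OnePoint ℂ) = ((P.eval z / Q.eval z : ℂ) : OnePoint ℂ))
    (c' c : ℂ) (ζ₀ : ℂ) (h : f (sphChart c' ζ₀) ≠ (c : OnePoint ℂ)) :
    DifferentiableAt ℂ (fun ζ => sphInv c (f (sphChart c' ζ))) ζ₀ := by
  have hgood : ∀ ζ : ℂ, ζ ≠ 0 → Q.eval (c' + ζ⁻¹) ≠ 0 → f (sphChart c' ζ) ≠ (c : OnePoint ℂ) →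
      DifferentiableAt ℂ (fun ζ => sphInv c (f (sphChart c' ζ))) ζ := by
    intro ζ h1 h2 h3
    have hRval : f (sphChart c' ζ)
        = ((P.eval (c' + ζ⁻¹) / Q.eval (c' + ζ⁻¹) : ℂ) : OnePoint ℂ) := by
      rw [sphChart_of_ne c' h1]; exact hfPQ _ h2
    have hRc : P.eval (c' + ζ⁻¹) / Q.eval (c' + ζ⁻¹) - c ≠ 0 := by
      intro h0
      exact h3 (by rw [hRval, sub_eq_zero.mp h0])
    have hinner : DifferentiableAt ℂ (fun ζ' : ℂ => c' + ζ'⁻¹) ζ :=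
      (differentiableAt_const _).add (differentiableAt_inv h1)
    have hφ : DifferentiableAt ℂ
        (fun ζ' => (P.eval (c' + ζ'⁻¹) / Q.eval (c' + ζ'⁻¹) - c)⁻¹) ζ := by
      have hPd : DifferentiableAt ℂ (fun ζ' : ℂ => P.eval (c' + ζ'⁻¹)) ζ :=
        (P.differentiable.differentiableAt).comp ζ hinner
      have hQd : DifferentiableAt ℂ (fun ζ' : ℂ => Q.eval (c' + ζ'⁻¹)) ζ :=
        (Q.differentiable.differentiableAt).comp ζ hinner
      exact (((hPd.div hQd h2).sub (differentiableAt_const c)).inv hRc)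
    have hev : (fun ζ' => sphInv c (f (sphChart c' ζ')))
        =ᶠ[𝓝 ζ] (fun ζ' => (P.eval (c' + ζ'⁻¹) / Q.eval (c' + ζ'⁻¹) - c)⁻¹) := by
      have e1 : ∀ᶠ ζ' in 𝓝 ζ, ζ' ≠ 0 := (isOpen_compl_singleton).eventually_mem h1
      have e2 : ∀ᶠ ζ' in 𝓝 ζ, Q.eval (c' + ζ'⁻¹) ≠ 0 := by
        have hc : ContinuousAt (fun ζ' : ℂ => Q.eval (c' + ζ'⁻¹)) ζ :=
          (Q.continuous.continuousAt).comp ((continuousAt_const.add (continuousAt_inv₀ h1)))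
        exact hc.eventually_ne h2
      filter_upwards [e1, e2] with ζ' h1' h2'
      rw [sphChart_of_ne c' h1', hfPQ _ h2', sphInv_coe]
    exact hev.differentiableAt_iff.mpr hφ
  by_cases hb : ζ₀ ≠ 0 ∧ Q.eval (c' + ζ₀⁻¹) ≠ 0
  · exact hgood ζ₀ hb.1 hb.2 h
  · have hfc : Continuous fun ζ : ℂ => f (sphChart c' ζ) := hf.comp (continuous_sphChart c')
    have hcont : ContinuousAt (fun ζ => sphInv c (f (sphChart c' ζ))) ζ₀ := by
      have := ContinuousAt.comp (x := ζ₀) (g := sphInv c)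
        (f := fun ζ : ℂ => f (sphChart c' ζ)) (continuousAt_sphInv h) hfc.continuousAt
      simpa [Function.comp_def] using this
    set S : Set ℂ := insert 0 ((fun z : ℂ => (z - c')⁻¹) '' {z | Q.IsRoot z}) with hS_def
    have hS : S.Finite := ((finite_setOf_isRoot hQ).image _).insert 0
    have e3 : ∀ᶠ ζ in 𝓝 ζ₀, f (sphChart c' ζ) ≠ (c : OnePoint ℂ) :=
      hfc.continuousAt.eventually_ne h
    have e4 : ∀ᶠ ζ in 𝓝[≠] ζ₀, ∀ s ∈ S, ζ ≠ s := by
      rw [eventually_all_finite hS]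
      intro s hs
      rcases eq_or_ne s ζ₀ with rfl | hsne
      · exact eventually_mem_nhdsWithin
      · exact eventually_nhdsWithin_of_eventually_nhds
          ((isOpen_compl_singleton).eventually_mem (by simpa [eq_comm] using hsne.symm))
    have hpunct : ∀ᶠ ζ in 𝓝[≠] ζ₀,
        DifferentiableAt ℂ (fun ζ => sphInv c (f (sphChart c' ζ))) ζ := by
      filter_upwards [e4, eventually_nhdsWithin_of_eventually_nhds e3] with ζ hζS hζc
      have hz0 : ζ ≠ 0 := hζS 0 (mem_insert _ _)
      have hQz : Q.eval (c' + ζ⁻¹) ≠ 0 := by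
        intro hroot
        refine hζS ζ ?_ rfl
        refine mem_insert_of_mem _ ⟨c' + ζ⁻¹, hroot, ?_⟩
        simp
      exact hgood ζ hz0 hQz hζc
    exact (Complex.analyticAt_of_differentiable_on_punctured_nhds_of_continuousAt
      hpunct hcont).differentiableAt

lemma iter_diff (hf : Continuous f) (hQ : Q ≠ 0)
    (hfPQ : ∀ z : ℂ, Q.eval z ≠ 0 → f (z : OnePoint ℂ) = ((P.eval z / Q.eval z : ℂ) : OnePoint ℂ)) :
    ∀ (n : ℕ) (c' c ζ₀ : ℂ), f^[n] (sphChart c' ζ₀) ≠ (c : OnePoint ℂ) →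
      DifferentiableAt ℂ (fun ζ => sphInv c (f^[n] (sphChart c' ζ))) ζ₀ := by
  intro n
  induction n with
  | zero =>
    intro c' c ζ₀ h
    simp only [Function.iterate_zero, id_eq] at h ⊢
    have key : ∀ ζ : ℂ, sphChart c' ζ ≠ (c : OnePoint ℂ) →
        (c' - c) * ζ + 1 ≠ 0 ∧ sphInv c (sphChart c' ζ) = ζ / ((c' - c) * ζ + 1) := by
      intro ζ hne
      rcases eq_or_ne ζ 0 with rfl | hz
      · simp
      · have h2 : c' + ζ⁻¹ ≠ c := fun hcc => hne (by rw [sphChart_of_ne c' hz, hcc])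
        have hcalc : c' + ζ⁻¹ - c = ((c' - c) * ζ + 1) / ζ := by field_simp; ring
        have hden : (c' - c) * ζ + 1 ≠ 0 := by
          intro h0
          apply h2
          have : c' + ζ⁻¹ - c = 0 := by rw [hcalc, h0, zero_div]
          exact sub_eq_zero.mp this
        refine ⟨hden, ?_⟩
        rw [sphChart_of_ne c' hz, sphInv_coe, hcalc, inv_div]
    obtain ⟨hden, -⟩ := key ζ₀ h
    have hφ : DifferentiableAt ℂ (fun ζ : ℂ => ζ / ((c' - c) * ζ + 1)) ζ₀ :=
      differentiableAt_fun_id.div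
        (((differentiableAt_const _).mul differentiableAt_fun_id).add (differentiableAt_const _))
        hden
    have e : ∀ᶠ ζ in 𝓝 ζ₀, sphChart c' ζ ≠ (c : OnePoint ℂ) :=
      ((continuous_sphChart c').continuousAt).eventually_ne h
    have hev : (fun ζ => sphInv c (sphChart c' ζ))
        =ᶠ[𝓝 ζ₀] (fun ζ : ℂ => ζ / ((c' - c) * ζ + 1)) := by
      filter_upwards [e] with ζ hζ
      exact (key ζ hζ).2
    exact hev.differentiableAt_iff.mpr hφ
  | succ n ih =>
    intro c' c ζ₀ h
    have hword : f^[n+1] (sphChart c' ζ₀) = f^[n] (f (sphChart c' ζ₀)) :=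
      Function.iterate_succ_apply f n _
    obtain ⟨c'', hc''⟩ : ∃ c'' : ℂ, f (sphChart c' ζ₀) ≠ (c'' : OnePoint ℂ) := by
      by_cases h0 : f (sphChart c' ζ₀) = ((0 : ℂ) : OnePoint ℂ)
      · exact ⟨1, by rw [h0]; simp [OnePoint.coe_eq_coe]⟩
      · exact ⟨0, h0⟩
    have hin : DifferentiableAt ℂ (fun ζ => sphInv c'' (f (sphChart c' ζ))) ζ₀ :=
      base1 hf hQ hfPQ c' c'' ζ₀ hc''
    have hξ : f^[n] (sphChart c'' (sphInv c'' (f (sphChart c' ζ₀)))) ≠ (c : OnePoint ℂ) := by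
      rw [sphChart_sphInv hc'', ← hword]; exact h
    have hout : DifferentiableAt ℂ (fun ξ => sphInv c (f^[n] (sphChart c'' ξ)))
        (sphInv c'' (f (sphChart c' ζ₀))) := ih c'' c _ hξ
    have hcomp : DifferentiableAt ℂ
        (fun ζ => sphInv c (f^[n] (sphChart c'' (sphInv c'' (f (sphChart c' ζ)))))) ζ₀ := by
      simpa [Function.comp_def] using hout.comp ζ₀ hin
    have e : ∀ᶠ ζ in 𝓝 ζ₀, f (sphChart c' ζ) ≠ (c'' : OnePoint ℂ) :=
      (hf.comp (continuous_sphChart c')).continuousAt.eventually_ne hc''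
    have hev : (fun ζ => sphInv c (f^[n+1] (sphChart c' ζ)))
        =ᶠ[𝓝 ζ₀] (fun ζ => sphInv c (f^[n] (sphChart c'' (sphInv c'' (f (sphChart c' ζ)))))) := by
      filter_upwards [e] with ζ hζ
      rw [sphChart_sphInv hζ, Function.iterate_succ_apply]
    exact hev.differentiableAt_iff.mpr hcomp


end Core


lemma unif_on_compact {g : ℂ → OnePoint ℂ} (hg : Continuous g) {K : Set ℂ} (hK : IsCompact K)
    {V : Set (OnePoint ℂ × OnePoint ℂ)} (hV : V ∈ uniformity (OnePoint ℂ)) :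
    ∃ δ > 0, ∀ u ∈ K, ∀ v ∈ K, dist u v < δ → (g u, g v) ∈ V := by
  haveI : CompactSpace K := isCompact_iff_compactSpace.mp hK
  have hgc : Continuous fun x : K => g x := hg.comp continuous_subtype_val
  have hu : UniformContinuous fun x : K => g x :=
    CompactSpace.uniformContinuous_of_continuous hgc
  have h2 : (Prod.map (fun x : K => g x) (fun x : K => g x)) ⁻¹' V ∈ 𝓤 K := hu hV
  rw [uniformity_subtype] at h2
  obtain ⟨t, ht, hsub⟩ := h2
  obtain ⟨δ, hδ, hdist⟩ := Metric.mem_uniformity_dist.mp ht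
  refine ⟨δ, hδ, fun u hu' v hv' hd => ?_⟩
  exact hsub (show ((⟨u, hu'⟩ : K), (⟨v, hv'⟩ : K)) ∈ _ from hdist hd)


end FBJ
open FBJ

theorem frontier_basin_eq_juliaSet
    (f : OnePoint ℂ → OnePoint ℂ) (d : ℕ) (hd : 2 ≤ d)
    (P Q : Polynomial ℂ) (hf : Continuous f) (hPQ : IsCoprime P Q)
    (hne : ¬(P.natDegree = 0 ∧ Q.natDegree = 0)) (hQ : Q ≠ 0)
    (hdeg : d = max P.natDegree Q.natDegree)
    (hfPQ : ∀ z : ℂ, Q.eval z ≠ 0 → f (z : OnePoint ℂ) = ((P.eval z / Q.eval z : ℂ) : OnePoint ℂ))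
    (R : ℂ → ℂ) (hR : ∀ z : ℂ, R z = P.eval z / Q.eval z)
    (z₀ : ℂ) (hz₀ : Q.eval z₀ ≠ 0) (hfix : R z₀ = z₀)
    (hattr : ‖deriv R z₀‖ < 1) :
    frontier {w : OnePoint ℂ |
        Tendsto (fun n : ℕ => f^[n] w) atTop (nhds (z₀ : OnePoint ℂ))} = JuliaSet f := by
  obtain rfl : R = fun z => P.eval z / Q.eval z := funext hR
  set Rf : ℂ → ℂ := fun z => P.eval z / Q.eval z with hRfdef
  set A : Set (OnePoint ℂ) := {w : OnePoint ℂ |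
      Tendsto (fun n : ℕ => f^[n] w) atTop (nhds (z₀ : OnePoint ℂ))} with hAdef
  -- contraction data
  have hRdiff : DifferentiableAt ℂ Rf z₀ :=
    (P.differentiableAt).div (Q.differentiableAt) hz₀
  set dv : ℂ := deriv Rf z₀ with hdv
  have hd1 : ‖dv‖ < 1 := hattr
  set k : ℝ := (1 + ‖dv‖) / 2 with hkdef
  have hk0 : 0 ≤ k := by positivity
  have hk1 : k < 1 := by rw [hkdef]; linarith
  have hε : (0:ℝ) < (1 - ‖dv‖) / 2 := by linarith
  have hlo : (fun z => Rf z - Rf z₀ - (z - z₀) • dv) =o[𝓝 z₀] fun z => z - z₀ :=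
    hasDerivAt_iff_isLittleO.mp hRdiff.hasDerivAt
  have ev1 : ∀ᶠ z in 𝓝 z₀, ‖Rf z - Rf z₀ - (z - z₀) • dv‖ ≤ (1 - ‖dv‖)/2 * ‖z - z₀‖ :=
    hlo.def hε
  have ev2 : ∀ᶠ z in 𝓝 z₀, Q.eval z ≠ 0 := (Q.continuous.continuousAt).eventually_ne hz₀
  have evtot : ∀ᶠ z in 𝓝 z₀, Q.eval z ≠ 0 ∧ ‖Rf z - z₀‖ ≤ k * ‖z - z₀‖ := by
    filter_upwards [ev1, ev2] with z h1 h2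
    refine ⟨h2, ?_⟩
    have h3 : ‖Rf z - z₀‖ ≤ ‖Rf z - Rf z₀ - (z - z₀) • dv‖ + ‖(z - z₀) • dv‖ := by
      have : Rf z - z₀ = (Rf z - Rf z₀ - (z - z₀) • dv) + (z - z₀) • dv := by
        rw [hfix]; ring
      rw [this]; exact norm_add_le _ _
    have h4 : ‖(z - z₀) • dv‖ = ‖dv‖ * ‖z - z₀‖ := by
      rw [norm_smul]; ring
    rw [hkdef]; rw [h4] at h3; linarith
  obtain ⟨r, hr0, hball⟩ : ∃ r > 0, ∀ z ∈ closedBall z₀ r,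
      Q.eval z ≠ 0 ∧ ‖Rf z - z₀‖ ≤ k * ‖z - z₀‖ := by
    obtain ⟨r, hr0, hsub⟩ := Metric.nhds_basis_closedBall.eventually_iff.mp evtot
    exact ⟨r, hr0, fun z hz => hsub hz⟩
  -- orbits inside the ball
  have horb : ∀ z ∈ closedBall z₀ r, ∀ n : ℕ,
      ‖Rf^[n] z - z₀‖ ≤ k ^ n * ‖z - z₀‖ ∧
      f^[n] ((z : ℂ) : OnePoint ℂ) = ((Rf^[n] z : ℂ) : OnePoint ℂ) := by
    intro z hz n
    induction n with
    | zero => simp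
    | succ n ih =>
      obtain ⟨ih1, ih2⟩ := ih
      have hzr : ‖z - z₀‖ ≤ r := by
        have := mem_closedBall.mp hz; rwa [dist_eq_norm] at this
      have hmem : Rf^[n] z ∈ closedBall z₀ r := by
        rw [mem_closedBall, dist_eq_norm]
        calc ‖Rf^[n] z - z₀‖ ≤ k ^ n * ‖z - z₀‖ := ih1
          _ ≤ 1 * r := by
            apply mul_le_mul (pow_le_one₀ hk0 hk1.le) hzr (norm_nonneg _) zero_le_one
          _ = r := one_mul r
      obtain ⟨hQn, hcontr⟩ := hball _ hmem
      constructor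
      · rw [Function.iterate_succ_apply']
        calc ‖Rf (Rf^[n] z) - z₀‖ ≤ k * ‖Rf^[n] z - z₀‖ := hcontr
          _ ≤ k * (k ^ n * ‖z - z₀‖) := mul_le_mul_of_nonneg_left ih1 hk0
          _ = k ^ (n+1) * ‖z - z₀‖ := by ring
      · rw [Function.iterate_succ_apply', Function.iterate_succ_apply', ih2, hfPQ _ hQn]
  have hz₀r : z₀ ∈ closedBall z₀ r := mem_closedBall_self hr0.le
  have hsub : ∀ z ∈ closedBall z₀ r, ((z : ℂ) : OnePoint ℂ) ∈ A := by
    intro z hz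
    show Tendsto (fun n : ℕ => f^[n] ((z : ℂ) : OnePoint ℂ)) atTop (nhds ((z₀ : ℂ) : OnePoint ℂ))
    have h1 : Tendsto (fun n : ℕ => Rf^[n] z) atTop (𝓝 z₀) := by
      rw [tendsto_iff_dist_tendsto_zero]
      refine squeeze_zero (g := fun n : ℕ => k ^ n * ‖z - z₀‖) (fun n => dist_nonneg)
        (fun n => ?_) ?_
      · rw [dist_eq_norm]; exact (horb z hz n).1
      · have := (tendsto_pow_atTop_nhds_zero_of_lt_one hk0 hk1).mul_const ‖z - z₀‖
        rwa [zero_mul] at this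
    have h2 := (OnePoint.continuous_coe.tendsto z₀).comp h1
    exact h2.congr (fun n => ((horb z hz n).2).symm)
  have hz₀A : ((z₀ : ℂ) : OnePoint ℂ) ∈ A := hsub z₀ hz₀r
  set Bop : Set (OnePoint ℂ) := (fun z : ℂ => (z : OnePoint ℂ)) '' ball z₀ r with hBdef
  have hBopen : IsOpen Bop := OnePoint.isOpenMap_coe _ isOpen_ball
  have hBA : Bop ⊆ A := by rintro _ ⟨z, hz, rfl⟩; exact hsub z (ball_subset_closedBall hz)
  have hz₀B : ((z₀ : ℂ) : OnePoint ℂ) ∈ Bop := ⟨z₀, mem_ball_self hr0, rfl⟩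
  have hshift : ∀ w, (f w ∈ A ↔ w ∈ A) := by
    intro w
    simp only [hAdef, mem_setOf_eq]
    rw [show (fun n : ℕ => f^[n] (f w)) = (fun n : ℕ => f^[n+1] w) from
      funext fun n => (Function.iterate_succ_apply f n w).symm]
    exact tendsto_add_atTop_iff_nat (f := fun n : ℕ => f^[n] w) 1
  have hiter : ∀ (n : ℕ) w, (f^[n] w ∈ A ↔ w ∈ A) := by
    intro n
    induction n with
    | zero => intro w; simp
    | succ n ih =>
      intro w
      rw [Function.iterate_succ_apply, ih (f w), hshift w]
  have hchar : ∀ w, w ∈ A ↔ ∃ n, f^[n] w ∈ Bop := by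
    intro w
    constructor
    · intro h
      exact (h.eventually (hBopen.mem_nhds hz₀B)).exists
    · rintro ⟨n, hn⟩
      exact (hiter n w).mp (hBA hn)
  have hAopen : IsOpen A := by
    have : A = ⋃ n : ℕ, f^[n] ⁻¹' Bop := by
      ext w; simp only [mem_iUnion, mem_preimage]; exact hchar w
    rw [this]
    exact isOpen_iUnion fun n => hBopen.preimage (hf.iterate n)
  -- Part 2a : equicontinuity on the basin A
  have hFatouA : EquicontinuousOn (fun n : ℕ => f^[n]) A := by
    intro a ha V hV
    obtain ⟨δ, hδ0, hδ⟩ := unif_on_compact OnePoint.continuous_coe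
      (isCompact_closedBall z₀ r) hV
    obtain ⟨N, hN⟩ := (hchar a).mp ha
    obtain ⟨m, hm⟩ : ∃ m : ℕ, 2 * (k ^ m * r) < δ := by
      have h1 : Tendsto (fun m : ℕ => 2 * (k ^ m * r)) atTop (𝓝 0) := by
        have := ((tendsto_pow_atTop_nhds_zero_of_lt_one hk0 hk1).mul_const r).const_mul 2
        rwa [zero_mul, mul_zero] at this
      exact (h1.eventually_lt_const hδ0).exists
    have key : ∀ w, f^[N] w ∈ Bop → ∀ n, N ≤ n → ∃ u ∈ closedBall z₀ r,
        f^[n] w = ((u : ℂ) : OnePoint ℂ) ∧ ‖u - z₀‖ ≤ k ^ (n - N) * r := by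
      intro w hw n hn
      obtain ⟨u₀, hu₀, hfu⟩ := hw
      have hu₀c : u₀ ∈ closedBall z₀ r := ball_subset_closedBall hu₀
      have hu₀r : ‖u₀ - z₀‖ ≤ r := by
        have := mem_closedBall.mp hu₀c; rwa [dist_eq_norm] at this
      have hbd : ‖Rf^[n - N] u₀ - z₀‖ ≤ k ^ (n - N) * r := by
        calc ‖Rf^[n - N] u₀ - z₀‖ ≤ k ^ (n - N) * ‖u₀ - z₀‖ := (horb u₀ hu₀c (n - N)).1
          _ ≤ k ^ (n - N) * r := mul_le_mul_of_nonneg_left hu₀r (pow_nonneg hk0 _)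
      refine ⟨Rf^[n - N] u₀, ?_, ?_, hbd⟩
      · rw [mem_closedBall, dist_eq_norm]
        calc ‖Rf^[n - N] u₀ - z₀‖ ≤ k ^ (n - N) * r := hbd
          _ ≤ 1 * r := mul_le_mul_of_nonneg_right (pow_le_one₀ hk0 hk1.le) hr0.le
          _ = r := one_mul r
      · have : f^[n] w = f^[n - N] (f^[N] w) := by
          rw [← Function.iterate_add_apply]
          congr 1
          omega
        rw [this, ← hfu]
        exact (horb u₀ hu₀c (n - N)).2
    have hWnb : f^[N] ⁻¹' Bop ∈ 𝓝 a := (hBopen.preimage (hf.iterate N)).mem_nhds hN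
    have hfin : ∀ᶠ w in 𝓝 a, ∀ n ∈ Finset.range (N + m), (f^[n] a, f^[n] w) ∈ V := by
      rw [eventually_all_finset]
      intro n _
      exact (hf.iterate n).continuousAt (UniformSpace.ball_mem_nhds _ hV)
    filter_upwards [nhdsWithin_le_nhds hWnb, nhdsWithin_le_nhds hfin] with w hw hwfin
    intro n
    by_cases hn : n < N + m
    · exact hwfin n (Finset.mem_range.mpr hn)
    · push_neg at hn
      have hnN : N ≤ n := le_trans (Nat.le_add_right N m) hn
      obtain ⟨u, hu, hfw, hubd⟩ := key w hw n hnN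
      obtain ⟨u', hu', hfa, hubd'⟩ := key a hN n hnN
      have hmn : m ≤ n - N := by omega
      have hpow : k ^ (n - N) ≤ k ^ m := pow_le_pow_of_le_one hk0 hk1.le hmn
      have hdist : dist u' u < δ := by
        calc dist u' u ≤ dist u' z₀ + dist z₀ u := dist_triangle _ _ _
          _ = ‖u' - z₀‖ + ‖u - z₀‖ := by rw [dist_eq_norm, dist_comm, dist_eq_norm]
          _ ≤ k ^ (n - N) * r + k ^ (n - N) * r := add_le_add hubd' hubd
          _ = 2 * (k ^ (n - N) * r) := by ring
          _ ≤ 2 * (k ^ m * r) := by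
              have := mul_le_mul_of_nonneg_right hpow hr0.le
              linarith
          _ < δ := hm
      have := hδ u' hu' u hu hdist
      simpa only [hfa, hfw] using this
  -- Part 2b : points outside the closure of A are in the Fatou set
  have hFatouExt : ∀ x : OnePoint ℂ, x ∉ closure A → x ∈ FatouSet f := by
    intro x hx
    have hxA : x ∉ A := fun h => hx (subset_closure h)
    have hxz₀ : x ≠ ((z₀ : ℂ) : OnePoint ℂ) := fun h => hxA (h ▸ hz₀A)
    set ζ₀ := sphInv z₀ x with hζ₀
    have hxchart : sphChart z₀ ζ₀ = x := sphChart_sphInv hxz₀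
    set Ω : Set ℂ := sphChart z₀ ⁻¹' (closure A)ᶜ with hΩdef
    have hΩo : IsOpen Ω := isClosed_closure.isOpen_compl.preimage (continuous_sphChart z₀)
    have hζΩ : ζ₀ ∈ Ω := by
      show sphChart z₀ ζ₀ ∈ (closure A)ᶜ
      rw [hxchart]; exact hx
    obtain ⟨ρ, hρ0, hρΩ⟩ : ∃ ρ > 0, closedBall ζ₀ (2 * ρ) ⊆ Ω := by
      obtain ⟨ε, hε0, hsubε⟩ := Metric.nhds_basis_closedBall.mem_iff.mp (hΩo.mem_nhds hζΩ)
      exact ⟨ε / 2, by linarith, by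
        intro y hy
        apply hsubε
        rw [mem_closedBall] at hy ⊢
        linarith⟩
    have havoid : ∀ ζ, ζ ∈ Ω → ∀ n : ℕ, f^[n] (sphChart z₀ ζ) ∉ A := by
      intro ζ hζ n hmem
      exact hζ (subset_closure ((hiter n _).mp hmem))
    have hneζ : ∀ ζ, ζ ∈ Ω → ∀ n, f^[n] (sphChart z₀ ζ) ≠ ((z₀ : ℂ) : OnePoint ℂ) := by
      intro ζ hζ n h
      exact havoid ζ hζ n (h ▸ hz₀A)
    have hbound : ∀ ζ, ζ ∈ Ω → ∀ n, ‖sphInv z₀ (f^[n] (sphChart z₀ ζ))‖ ≤ 1 / r := by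
      intro ζ hζ n
      have hu : f^[n] (sphChart z₀ ζ) ∉ Bop := fun h => havoid ζ hζ n (hBA h)
      set u := f^[n] (sphChart z₀ ζ) with hudef
      clear_value u
      induction u using OnePoint.rec with
      | infty => simp; positivity
      | coe v =>
        have hv : v ∉ ball z₀ r := fun h => hu ⟨v, h, rfl⟩
        have hvr : r ≤ ‖v - z₀‖ := by
          have := mem_ball.not.mp hv
          push_neg at this
          rwa [dist_eq_norm] at this
        rw [sphInv_coe, norm_inv, one_div]
        exact inv_anti₀ hr0 hvr
    set L : ℝ := (2 * (1 / r) + 1) / ρ with hLdef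
    have hL0 : 0 < L := by positivity
    have hlip : ∀ n : ℕ, ∀ ξ ∈ ball ζ₀ ρ, ∀ ζ ∈ ball ξ ρ,
        dist (sphInv z₀ (f^[n] (sphChart z₀ ζ))) (sphInv z₀ (f^[n] (sphChart z₀ ξ)))
          ≤ L * dist ζ ξ := by
      intro n ξ hξ ζ hζ
      have hsubΩ : ball ξ ρ ⊆ Ω := by
        intro y hy
        apply hρΩ
        rw [mem_closedBall]
        calc dist y ζ₀ ≤ dist y ξ + dist ξ ζ₀ := dist_triangle _ _ _
          _ ≤ ρ + ρ := add_le_add (mem_ball.mp hy).le (mem_ball.mp hξ).le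
          _ = 2 * ρ := by ring
      have hdiff : DifferentiableOn ℂ (fun ζ => sphInv z₀ (f^[n] (sphChart z₀ ζ)))
          (ball ξ ρ) := fun y hy =>
        (iter_diff hf hQ hfPQ n z₀ z₀ y (hneζ y (hsubΩ hy) n)).differentiableWithinAt
      have hmaps : MapsTo (fun ζ => sphInv z₀ (f^[n] (sphChart z₀ ζ))) (ball ξ ρ)
          (ball (sphInv z₀ (f^[n] (sphChart z₀ ξ))) (2 * (1 / r) + 1)) := by
        intro y hy
        rw [mem_ball]
        calc dist (sphInv z₀ (f^[n] (sphChart z₀ y))) (sphInv z₀ (f^[n] (sphChart z₀ ξ)))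
            ≤ ‖sphInv z₀ (f^[n] (sphChart z₀ y))‖ + ‖sphInv z₀ (f^[n] (sphChart z₀ ξ))‖ :=
              dist_le_norm_add_norm _ _
          _ ≤ 1 / r + 1 / r := add_le_add (hbound y (hsubΩ hy) n)
              (hbound ξ (hsubΩ (mem_ball_self hρ0)) n)
          _ < 2 * (1 / r) + 1 := by linarith
      have := Complex.dist_le_div_mul_dist_of_mapsTo_ball hdiff (hmaps.mono_right ball_subset_closedBall) hζ
      rwa [hLdef]
    set U : Set (OnePoint ℂ) :=
      {u : OnePoint ℂ | u ≠ ((z₀ : ℂ) : OnePoint ℂ)} ∩ sphInv z₀ ⁻¹' ball ζ₀ ρ with hUdef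
    have hUo : IsOpen U := by
      have h1 : IsOpen {u : OnePoint ℂ | u ≠ ((z₀ : ℂ) : OnePoint ℂ)} := isOpen_ne
      have h2 : ContinuousOn (sphInv z₀) {u : OnePoint ℂ | u ≠ ((z₀ : ℂ) : OnePoint ℂ)} :=
        fun u hu => (continuousAt_sphInv hu).continuousWithinAt
      exact h2.isOpen_inter_preimage h1 isOpen_ball
    have hxU : x ∈ U := ⟨hxz₀, by show sphInv z₀ x ∈ ball ζ₀ ρ; rw [← hζ₀]; exact mem_ball_self hρ0⟩
    have hballΩ : ball ζ₀ ρ ⊆ Ω := fun y hy =>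
      hρΩ (mem_closedBall.mpr (by have := mem_ball.mp hy; linarith))
    have hUΩ : ∀ u ∈ U, sphInv z₀ u ∈ Ω := fun u hu => hballΩ hu.2
    refine ⟨U, hUo, hxU, ?_⟩
    intro y hy V hV
    obtain ⟨δ, hδ0, hδ⟩ := unif_on_compact (continuous_sphChart z₀)
      (isCompact_closedBall 0 (1/r)) hV
    set η := sphInv z₀ y with hη
    have hyb : η ∈ ball ζ₀ ρ := hy.2
    have hyΩ : η ∈ Ω := hballΩ hyb
    have hrep : ∀ u ∈ U, ∀ n : ℕ,
        f^[n] u = sphChart z₀ (sphInv z₀ (f^[n] (sphChart z₀ (sphInv z₀ u)))) := by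
      intro u hu n
      have h1 : f^[n] u ≠ ((z₀ : ℂ) : OnePoint ℂ) := by
        have := hneζ (sphInv z₀ u) (hUΩ u hu) n
        rwa [sphChart_sphInv hu.1] at this
      rw [sphChart_sphInv hu.1, sphChart_sphInv h1]
    set δ' := min (δ / (L + 1)) ρ with hδ'
    have hδ'0 : 0 < δ' := lt_min (by positivity) hρ0
    have hev2 : ∀ᶠ w in 𝓝 y, dist (sphInv z₀ w) η < δ' := by
      have hcy : ContinuousAt (sphInv z₀) y := continuousAt_sphInv hy.1
      have h2 := hcy (Metric.ball_mem_nhds η hδ'0)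
      filter_upwards [h2] with w hw
      exact mem_ball.mp hw
    filter_upwards [eventually_mem_nhdsWithin, nhdsWithin_le_nhds hev2] with w hwU hwd
    intro n
    show (f^[n] y, f^[n] w) ∈ V
    have hwb : sphInv z₀ w ∈ ball η ρ :=
      mem_ball.mpr (lt_of_lt_of_le hwd (min_le_right _ _))
    have h1 := hlip n η hyb (sphInv z₀ w) hwb
    have hbd1 : sphInv z₀ (f^[n] (sphChart z₀ η)) ∈ closedBall (0:ℂ) (1/r) :=
      mem_closedBall_zero_iff.mpr (hbound η hyΩ n)
    have hbd2 : sphInv z₀ (f^[n] (sphChart z₀ (sphInv z₀ w))) ∈ closedBall (0:ℂ) (1/r) :=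
      mem_closedBall_zero_iff.mpr (hbound (sphInv z₀ w) (hballΩ hwU.2) n)
    have hd2 : dist (sphInv z₀ (f^[n] (sphChart z₀ η)))
        (sphInv z₀ (f^[n] (sphChart z₀ (sphInv z₀ w)))) < δ := by
      have hcm : dist (sphInv z₀ (f^[n] (sphChart z₀ η)))
          (sphInv z₀ (f^[n] (sphChart z₀ (sphInv z₀ w))))
          = dist (sphInv z₀ (f^[n] (sphChart z₀ (sphInv z₀ w))))
            (sphInv z₀ (f^[n] (sphChart z₀ η))) := dist_comm _ _
      rw [hcm]
      have hδ'le : δ' ≤ δ / (L + 1) := min_le_left _ _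
      have hdist' : dist (sphInv z₀ w) η < δ / (L + 1) := lt_of_lt_of_le hwd hδ'le
      calc dist (sphInv z₀ (f^[n] (sphChart z₀ (sphInv z₀ w))))
            (sphInv z₀ (f^[n] (sphChart z₀ η))) ≤ L * dist (sphInv z₀ w) η := h1
        _ < L * (δ / (L + 1)) := by
            apply mul_lt_mul_of_pos_left hdist' hL0
        _ < δ := by
            rw [mul_comm, div_mul_eq_mul_div, div_lt_iff₀ (by positivity : (0:ℝ) < L + 1)]
            nlinarith
    have hfin := hδ _ hbd1 _ hbd2 hd2
    rw [hrep y hy n, hrep w hwU n]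
    exact hfin
  -- Conclusion
  ext w
  simp only [JuliaSet, mem_compl_iff]
  constructor
  · intro hwfr hFat
    obtain ⟨U, hUo, hwU, hequi⟩ := hFat
    have hfr := hwfr
    rw [hAopen.frontier_eq] at hfr
    obtain ⟨hwcl, hwA⟩ := hfr
    obtain ⟨V, hV, hVsub⟩ := UniformSpace.mem_nhds_iff.mp (hBopen.mem_nhds hz₀B)
    obtain ⟨W, hW, hWsymm, hWV⟩ := comp_symm_mem_uniformity_sets hV
    have hEq := hequi w hwU W hW
    rw [hUo.nhdsWithin_eq hwU] at hEq
    obtain ⟨v, hvT, hvA⟩ := mem_closure_iff_nhds.mp hwcl _ hEq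
    have hvt : Tendsto (fun n : ℕ => f^[n] v) atTop (nhds ((z₀ : ℂ) : OnePoint ℂ)) := hvA
    have hev : ∀ᶠ n in atTop, f^[n] v ∈ UniformSpace.ball ((z₀ : ℂ) : OnePoint ℂ) W :=
      hvt (UniformSpace.ball_mem_nhds _ hW)
    obtain ⟨N, hN⟩ := hev.exists
    have h2 : (f^[N] v, f^[N] w) ∈ W := hWsymm.symm _ _ (hvT N)
    have h3 : (((z₀ : ℂ) : OnePoint ℂ), f^[N] w) ∈ SetRel.comp W W := ⟨f^[N] v, hN, h2⟩
    exact hwA ((hchar w).mpr ⟨N, hVsub (hWV h3)⟩)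
  · intro hJ
    by_contra hnfr
    apply hJ
    by_cases hwA : w ∈ A
    · exact ⟨A, hAopen, hwA, hFatouA⟩
    · refine hFatouExt w ?_
      intro hwcl
      exact hnfr (by rw [hAopen.frontier_eq]; exact ⟨hwcl, hwA⟩)
end
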